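/- arXiv:2009.06836 — 5 statements merged into one kernel-verified Lean document; each statement's English description precedes it below -/
import Mathlib

section
/- Ajax monoidal functors preserve adjoint commutative monoids: if (c, μ, η) is a commutative monoid object in C with μ and η right adjoints, and F : C ⟶ D is an ajax po-functor, then F(c) carries an adjoint commutative monoid structure with unit ρ ≫ F(η) and multiplication ρ_{c,c} ≫ F(μ). -/
open CategoryTheory

universe v₁ v₂ u₁ u₂

/-- A morphism `f : Y ⟶ X` in a po-category is a right adjoint if it has a left adjoint
`l : X ⟶ Y`, i.e. `𝟙 X ≤ l ≫ f` and `f ≫ l ≤ 𝟙 Y`. -/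
def IsRightAdjHom {E : Type u₂} [Category.{v₂} E] [∀ X Y : E, PartialOrder (X ⟶ Y)]
    {X Y : E} (f : Y ⟶ X) : Prop :=
  ∃ l : X ⟶ Y, 𝟙 X ≤ l ≫ f ∧ f ≫ l ≤ 𝟙 Y


theorem comp_radj {E : Type u₂} [Category.{v₂} E] [∀ X Y : E, PartialOrder (X ⟶ Y)]
    (compMono : ∀ {X Y Z : E} (f f' : X ⟶ Y) (g g' : Y ⟶ Z),
      f ≤ f' → g ≤ g' → f ≫ g ≤ f' ≫ g')
    {X Y Z : E} {f : Z ⟶ Y} {g : Y ⟶ X}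
    (hf : IsRightAdjHom f) (hg : IsRightAdjHom g) : IsRightAdjHom (f ≫ g) := by
  obtain ⟨lf, hf1, hf2⟩ := hf
  obtain ⟨lg, hg1, hg2⟩ := hg
  refine ⟨lg ≫ lf, ?_, ?_⟩
  · calc 𝟙 X ≤ lg ≫ g := hg1
      _ ≤ lg ≫ ((lf ≫ f) ≫ g) := by
          simpa using compMono _ _ _ _ (le_refl lg) (compMono _ _ _ _ hf1 (le_refl g))
      _ = (lg ≫ lf) ≫ f ≫ g := by simp
  · calc (f ≫ g) ≫ lg ≫ lf = f ≫ (g ≫ lg) ≫ lf := by simp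
      _ ≤ f ≫ 𝟙 Y ≫ lf := compMono _ _ _ _ (le_refl f) (compMono _ _ _ _ hg2 (le_refl lf))
      _ = f ≫ lf := by simp
      _ ≤ 𝟙 Z := hf2

theorem map_radj {C : Type u₁} {D : Type u₂} [Category.{v₁} C] [Category.{v₂} D]
    [∀ X Y : C, PartialOrder (X ⟶ Y)] [∀ X Y : D, PartialOrder (X ⟶ Y)] (F : C ⥤ D)
    (compMonoD : ∀ {X Y Z : D} (f f' : X ⟶ Y) (g g' : Y ⟶ Z),
      f ≤ f' → g ≤ g' → f ≫ g ≤ f' ≫ g')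
    (Fmono : ∀ {X Y : C} {f g : X ⟶ Y}, f ≤ g → F.map f ≤ F.map g)
    {X Y : C} {f : Y ⟶ X} (hf : IsRightAdjHom f) : IsRightAdjHom (F.map f) := by
  obtain ⟨l, h1, h2⟩ := hf
  refine ⟨F.map l, ?_, ?_⟩
  · simpa [F.map_comp] using Fmono h1
  · simpa [F.map_comp] using Fmono h2

/-- Ajax monoidal po-functors preserve adjoint commutative monoids: if `M` is a
commutative monoid object in `C` whose unit and multiplication are right adjoints, and
`F` is an ajax lax (braided) monoidal po-functor, then `F(M)` is a commutative monoid
object in `D` whose unit `ρ ≫ F(η)` and multiplication `ρ_{c,c} ≫ F(μ)` are right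
adjoints. -/
theorem statement9 {C : Type u₁} {D : Type u₂}
    [Category.{v₁} C] [Category.{v₂} D]
    [MonoidalCategory C] [MonoidalCategory D]
    [BraidedCategory C] [BraidedCategory D]
    [∀ X Y : C, PartialOrder (X ⟶ Y)] [∀ X Y : D, PartialOrder (X ⟶ Y)]
    (compMonoD : ∀ {X Y Z : D} (f f' : X ⟶ Y) (g g' : Y ⟶ Z),
      f ≤ f' → g ≤ g' → f ≫ g ≤ f' ≫ g')
    (F : C ⥤ D) [F.LaxBraided]
    (Fmono : ∀ {X Y : C} {f g : X ⟶ Y}, f ≤ g → F.map f ≤ F.map g)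
    (hε : IsRightAdjHom (Functor.LaxMonoidal.ε F))
    (hμ : ∀ X Y : C, IsRightAdjHom (Functor.LaxMonoidal.μ F X Y))
    (M : CommMon C)
    (hone : IsRightAdjHom (MonObj.one (X := M.X))) (hmul : IsRightAdjHom (MonObj.mul (X := M.X))) :
    MonObj.one (X := (F.mapCommMon.obj M).X) = Functor.LaxMonoidal.ε F ≫ F.map (MonObj.one (X := M.X)) ∧
    MonObj.mul (X := (F.mapCommMon.obj M).X) = Functor.LaxMonoidal.μ F M.X M.X ≫ F.map (MonObj.mul (X := M.X)) ∧
    IsRightAdjHom (MonObj.one (X := (F.mapCommMon.obj M).X)) ∧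
    IsRightAdjHom (MonObj.mul (X := (F.mapCommMon.obj M).X)) := by
  refine ⟨rfl, rfl, ?_, ?_⟩
  · exact comp_radj compMonoD hε (map_radj F compMonoD Fmono hone)
  · exact comp_radj compMonoD (hμ M.X M.X) (map_radj F compMonoD Fmono hmul)
end

section
/- Fundamental lemma of regular categories: for a regular category R, a relation x ⊆ r × s is a left adjoint in the relations po-category Rel(R) if and only if x is the graph of a (unique) morphism f : r ⟶ s in R; consequently R is isomorphic, via an identity-on-objects functor, to the category of left adjoints in Rel(R). -/
open CategoryTheory CategoryTheory.Limits

universe v u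

variable {C : Type u} [Category.{v} C]

namespace RegularLogic

variable [HasFiniteLimits C] [HasImages C]

/-- The graph of `f : X ⟶ s`, as a relation `X ⇸ s` in `Rel(C)`:
the subobject `⟨𝟙 X, f⟩ ⊆ X ⨯ s`. -/
noncomputable def graphRel {X s : C} (f : X ⟶ s) : Subobject (X ⨯ s) :=
  Subobject.mk (prod.lift (𝟙 X) f)

/-- The cograph of `g : X ⟶ r`, as a relation `r ⇸ X` in `Rel(C)`:
the subobject `⟨g, 𝟙 X⟩ ⊆ r ⨯ X`. -/
noncomputable def cographRel {X r : C} (g : X ⟶ r) : Subobject (r ⨯ X) :=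
  Subobject.mk (prod.lift g (𝟙 X))

/-- The identity relation on `r`: the diagonal subobject of `r ⨯ r`. -/
noncomputable def idRel (r : C) : Subobject (r ⨯ r) :=
  graphRel (𝟙 r)

/-- Composition of relations in `Rel(C)`: pull back over the middle object and take the
image of the induced map into `r ⨯ t`. -/
noncomputable def relComp {r s t : C} (x : Subobject (r ⨯ s)) (y : Subobject (s ⨯ t)) :
    Subobject (r ⨯ t) :=
  Subobject.mk (image.ι (prod.lift
    (pullback.fst (x.arrow ≫ prod.snd) (y.arrow ≫ prod.fst) ≫ x.arrow ≫ prod.fst)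
    (pullback.snd (x.arrow ≫ prod.snd) (y.arrow ≫ prod.fst) ≫ y.arrow ≫ prod.snd)))


namespace Aux

variable {C : Type u} [Category.{v} C] [HasFiniteLimits C] [HasImages C]

set_option linter.unusedSectionVars false

lemma le_idRel_iff {s : C} (z : Subobject (s ⨯ s)) :
    z ≤ idRel s ↔ z.arrow ≫ prod.fst = z.arrow ≫ prod.snd := by
  simp only [idRel, graphRel]
  constructor
  · intro h
    have hk := Subobject.ofLEMk_comp h
    rw [← hk, Category.assoc, Category.assoc, prod.lift_fst, prod.lift_snd]
  · intro h
    refine Subobject.le_mk_of_comm (z.arrow ≫ prod.fst) ?_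
    apply Limits.prod.hom_ext <;> simp [h, prod.lift_fst, prod.lift_snd, prod.lift_fst_assoc, prod.lift_snd_assoc]

lemma mk_image_le_idRel {A s : C} (w : A ⟶ s ⨯ s) (hw : w ≫ prod.fst = w ≫ prod.snd) :
    Subobject.mk (image.ι w) ≤ idRel s := by
  rw [le_idRel_iff]
  rw [← Subobject.underlyingIso_hom_comp_eq_mk (image.ι w), Category.assoc, Category.assoc]
  congr 1
  rw [← cancel_epi (factorThruImage w), ← Category.assoc, ← Category.assoc, image.fac, hw]

lemma eq_of_mk_image_le_idRel {A s : C} (w : A ⟶ s ⨯ s)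
    (h : Subobject.mk (image.ι w) ≤ idRel s) : w ≫ prod.fst = w ≫ prod.snd := by
  rw [le_idRel_iff, ← Subobject.underlyingIso_hom_comp_eq_mk (image.ι w),
    Category.assoc, Category.assoc, cancel_epi] at h
  rw [← image.fac w, Category.assoc, Category.assoc, h]

lemma idRel_le_mk_image {A r : C} (w : A ⟶ r ⨯ r) (t : r ⟶ A)
    (ht : t ≫ w = prod.lift (𝟙 r) (𝟙 r)) : idRel r ≤ Subobject.mk (image.ι w) := by
  simp only [idRel, graphRel]
  refine Subobject.mk_le_mk_of_comm (t ≫ factorThruImage w) ?_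
  rw [Category.assoc, image.fac, ht]

lemma exists_of_idRel_le_mk_image {A r : C} (w : A ⟶ r ⨯ r)
    (h : idRel r ≤ Subobject.mk (image.ι w)) :
    ∃ d : r ⟶ image w, d ≫ image.ι w = prod.lift (𝟙 r) (𝟙 r) := by
  simp only [idRel, graphRel] at h
  exact ⟨Subobject.ofMkLEMk _ _ h, Subobject.ofMkLEMk_comp h⟩

lemma desc_mono {X B : C} (h : X ⟶ B)
    [HasCoequalizer (pullback.fst h h) (pullback.snd h h)]
    (hstab : ∀ {X Y Z : C} (f : X ⟶ Y) (g : Z ⟶ Y),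
      Nonempty (RegularEpi f) → Nonempty (RegularEpi (pullback.snd f g))) :
    Mono (coequalizer.desc h (pullback.condition)) := by
  set c := coequalizer.π (pullback.fst h h) (pullback.snd h h) with hc
  set m := coequalizer.desc h (pullback.condition (f := h) (g := h)) with hm
  have hcm : c ≫ m = h := coequalizer.π_desc _ _
  constructor
  intro W g1 g2 hg
  obtain ⟨re1⟩ := hstab c g1 ⟨coequalizerRegular _ _⟩
  haveI := RegularEpi.epi _ re1
  obtain ⟨re2⟩ := hstab c (pullback.snd c g1 ≫ g2) ⟨coequalizerRegular _ _⟩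
  haveI := RegularEpi.epi _ re2
  set a1 := pullback.fst c g1 with ha1
  set e1 := pullback.snd c g1 with he1
  set a2 := pullback.fst c (e1 ≫ g2) with ha2
  set e2 := pullback.snd c (e1 ≫ g2) with he2
  have cond1 : a1 ≫ c = e1 ≫ g1 := pullback.condition
  have cond2 : a2 ≫ c = e2 ≫ (e1 ≫ g2) := pullback.condition
  have key : (e2 ≫ a1) ≫ h = a2 ≫ h := by
    calc (e2 ≫ a1) ≫ h = e2 ≫ (a1 ≫ c) ≫ m := by simp only [Category.assoc, hcm]
      _ = e2 ≫ e1 ≫ g1 ≫ m := by rw [cond1]; simp only [Category.assoc]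
      _ = e2 ≫ e1 ≫ g2 ≫ m := by rw [hg]
      _ = (a2 ≫ c) ≫ m := by rw [cond2]; simp only [Category.assoc]
      _ = a2 ≫ h := by rw [Category.assoc, hcm]
  set φ := pullback.lift (f := h) (g := h) (e2 ≫ a1) a2 key with hφ
  have h1 : φ ≫ pullback.fst h h = e2 ≫ a1 := pullback.lift_fst _ _ _
  have h2 : φ ≫ pullback.snd h h = a2 := pullback.lift_snd _ _ _
  have hcc : pullback.fst h h ≫ c = pullback.snd h h ≫ c := coequalizer.condition _ _
  have hfin : e2 ≫ e1 ≫ g1 = e2 ≫ e1 ≫ g2 := by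
    calc e2 ≫ e1 ≫ g1 = (e2 ≫ a1) ≫ c := by rw [← cond1]; simp only [Category.assoc]
      _ = φ ≫ pullback.fst h h ≫ c := by rw [← h1]; simp only [Category.assoc]
      _ = φ ≫ pullback.snd h h ≫ c := by rw [hcc]
      _ = a2 ≫ c := by rw [← Category.assoc, h2]
      _ = e2 ≫ e1 ≫ g2 := cond2
  rw [cancel_epi e2, cancel_epi e1] at hfin
  exact hfin

/-- Regular epi–mono factorization with a descent property. -/
lemma regular_epi_mono_fact {X B : C} (h : X ⟶ B)
    [hker : ∀ {X Y : C} (f : X ⟶ Y), HasCoequalizer (pullback.fst f f) (pullback.snd f f)]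
    (hstab : ∀ {X Y Z : C} (f : X ⟶ Y) (g : Z ⟶ Y),
      Nonempty (RegularEpi f) → Nonempty (RegularEpi (pullback.snd f g))) :
    ∃ (Q : C) (c : X ⟶ Q) (m : Q ⟶ B), Nonempty (RegularEpi c) ∧ Mono m ∧ c ≫ m = h ∧
      ∀ {T : C} (g : X ⟶ T), pullback.fst h h ≫ g = pullback.snd h h ≫ g →
        ∃ g' : Q ⟶ T, c ≫ g' = g := by
  refine ⟨coequalizer _ _, coequalizer.π _ _, coequalizer.desc h pullback.condition,
    ⟨coequalizerRegular _ _⟩, desc_mono h hstab, coequalizer.π_desc _ _, ?_⟩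
  intro T g hg
  exact ⟨coequalizer.desc g hg, coequalizer.π_desc _ _⟩

/-- The heart of the forward direction. -/
lemma main_construction {r s X Y : C} (p : X ⟶ r) (q : X ⟶ s) (u : Y ⟶ s) (v : Y ⟶ r)
    [hker : ∀ {X Y : C} (f : X ⟶ Y), HasCoequalizer (pullback.fst f f) (pullback.snd f f)]
    (hstab : ∀ {X Y Z : C} (f : X ⟶ Y) (g : Z ⟶ Y),
      Nonempty (RegularEpi f) → Nonempty (RegularEpi (pullback.snd f g)))
    (hd0 : ∃ d0 : r ⟶ image (prod.lift (pullback.fst q u ≫ p) (pullback.snd q u ≫ v)),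
      d0 ≫ image.ι (prod.lift (pullback.fst q u ≫ p) (pullback.snd q u ≫ v))
      = prod.lift (𝟙 r) (𝟙 r))
    (hsv : pullback.fst v p ≫ u = pullback.snd v p ≫ q) :
    ∃ f : r ⟶ s, p ≫ f = q ∧ (Mono p → IsIso p) := by
  set w' := prod.lift (pullback.fst q u ≫ p) (pullback.snd q u ≫ v) with hw'
  obtain ⟨d0, hd0⟩ := hd0
  have hwfst : w' ≫ prod.fst = pullback.fst q u ≫ p := by rw [hw']; exact prod.lift_fst _ _
  have hwsnd : w' ≫ prod.snd = pullback.snd q u ≫ v := by rw [hw']; exact prod.lift_snd _ _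
  obtain ⟨Qp, cp, mp, ⟨recp⟩, hmpmono, hcpmp, descp⟩ := regular_epi_mono_fact p hstab
  obtain ⟨Q0, c0, m0, ⟨rec0⟩, hm0mono, hc0m0, desc0⟩ := regular_epi_mono_fact w' hstab
  haveI := hmpmono; haveI := hm0mono; haveI := RegularEpi.epi _ rec0
  have hlf : image.lift ⟨_, m0, c0, hc0m0⟩ ≫ m0 = image.ι w' :=
    image.lift_fac (F' := ⟨_, m0, c0, hc0m0⟩)
  obtain ⟨d', hd'm⟩ : ∃ d' : r ⟶ Q0, d' ≫ m0 = prod.lift (𝟙 r) (𝟙 r) :=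
    ⟨d0 ≫ image.lift ⟨_, m0, c0, hc0m0⟩, by rw [Category.assoc, hlf, hd0]⟩
  -- single-valuedness of the relation (p, q)
  have sv : ∀ {T : C} (z1 z2 : T ⟶ X), z1 ≫ p = z2 ≫ p → z1 ≫ q = z2 ≫ q := by
    intro T z1 z2 hz
    have hδm : ((z1 ≫ p) ≫ d') ≫ m0 = (z1 ≫ p) ≫ prod.lift (𝟙 r) (𝟙 r) := by
      rw [Category.assoc, hd'm]
    generalize hδ : (z1 ≫ p) ≫ d' = δ at hδm
    obtain ⟨rec⟩ := hstab c0 δ ⟨rec0⟩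
    haveI := RegularEpi.epi _ rec
    have hπc : pullback.fst c0 δ ≫ c0 = pullback.snd c0 δ ≫ δ := pullback.condition
    set π := pullback.fst c0 δ with hπdef
    set cc := pullback.snd c0 δ with hccdef
    have hπw : π ≫ w' = cc ≫ (z1 ≫ p) ≫ prod.lift (𝟙 r) (𝟙 r) := by
      rw [← hc0m0, ← Category.assoc, hπc, Category.assoc, hδm]
    have hw2 : (π ≫ pullback.snd q u) ≫ v = (cc ≫ z1) ≫ p := by
      have h4 := hπw =≫ prod.snd
      rw [Category.assoc, hwsnd] at h4
      simp only [Category.assoc, prod.lift_snd, Category.comp_id] at h4 ⊢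
      exact h4
    have hηv2 : (π ≫ pullback.snd q u) ≫ v = (cc ≫ z2) ≫ p := by
      rw [hw2, Category.assoc, hz, ← Category.assoc]
    have key1 : (π ≫ pullback.snd q u) ≫ u = (cc ≫ z1) ≫ q := by
      have h5 := pullback.lift_fst (f := v) (g := p) _ _ hw2 =≫ u
      have h6 := pullback.lift_snd (f := v) (g := p) _ _ hw2 =≫ q
      rw [Category.assoc, hsv, ← Category.assoc] at h5
      rw [h6] at h5
      exact h5.symm
    have key2 : (π ≫ pullback.snd q u) ≫ u = (cc ≫ z2) ≫ q := by
      have h5 := pullback.lift_fst (f := v) (g := p) _ _ hηv2 =≫ u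
      have h6 := pullback.lift_snd (f := v) (g := p) _ _ hηv2 =≫ q
      rw [Category.assoc, hsv, ← Category.assoc] at h5
      rw [h6] at h5
      exact h5.symm
    have h7 : (cc ≫ z1) ≫ q = (cc ≫ z2) ≫ q := key1.symm.trans key2
    simp only [Category.assoc] at h7
    rwa [cancel_epi cc] at h7
  -- descend q along cp
  obtain ⟨f0, hcpf0⟩ := descp q (sv _ _ pullback.condition)
  -- the comparison map ψ : Q0 ⟶ Qp
  obtain ⟨ψ, hc0ψ⟩ : ∃ ψ : Q0 ⟶ Qp, c0 ≫ ψ = pullback.fst q u ≫ cp := by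
    apply desc0
    have hnw : pullback.fst w' w' ≫ w' = pullback.snd w' w' ≫ w' := pullback.condition
    have hnp : (pullback.fst w' w' ≫ pullback.fst q u) ≫ p
        = (pullback.snd w' w' ≫ pullback.fst q u) ≫ p := by
      have h8 := hnw =≫ prod.fst
      rw [Category.assoc, Category.assoc, hwfst] at h8
      simpa only [Category.assoc] using h8
    have hcp2 : (pullback.fst w' w' ≫ pullback.fst q u) ≫ cp
        = (pullback.snd w' w' ≫ pullback.fst q u) ≫ cp := by
      rw [← cancel_mono mp]
      simp only [Category.assoc]
      rw [hcpmp]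
      simpa only [Category.assoc] using hnp
    simpa only [Category.assoc] using hcp2
  have hψmp : ψ ≫ mp = m0 ≫ prod.fst := by
    rw [← cancel_epi c0, ← Category.assoc, hc0ψ, Category.assoc, hcpmp,
      ← Category.assoc, hc0m0, hwfst]
  have hσ : (d' ≫ ψ) ≫ mp = 𝟙 r := by
    rw [Category.assoc, hψmp, ← Category.assoc, hd'm, prod.lift_fst]
  have hmpσ : mp ≫ d' ≫ ψ = 𝟙 Qp := by
    rw [← cancel_mono mp, Category.assoc, hσ, Category.id_comp, Category.comp_id]
  haveI : IsIso mp := ⟨d' ≫ ψ, hmpσ, hσ⟩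
  refine ⟨(d' ≫ ψ) ≫ f0, ?_, ?_⟩
  · calc p ≫ (d' ≫ ψ) ≫ f0 = (cp ≫ mp) ≫ (d' ≫ ψ) ≫ f0 := by rw [hcpmp]
      _ = cp ≫ (mp ≫ d' ≫ ψ) ≫ f0 := by simp only [Category.assoc]
      _ = cp ≫ f0 := by rw [hmpσ, Category.id_comp]
      _ = q := hcpf0
  · intro hpm
    haveI : Mono p := hpm
    haveI : Mono cp := mono_of_mono_fac hcpmp
    haveI := isRegularEpi_of_regularEpi recp
    haveI : IsIso cp := isIso_of_mono_of_strongEpi _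
    rw [← hcpmp]
    infer_instance

lemma cond_one {r s X Y : C} (f : r ⟶ s) (ax : X ⟶ r ⨯ s) (ay : Y ⟶ s ⨯ r)
    (ex : X ≅ r) (ey : Y ≅ r)
    (hx : ax = ex.hom ≫ prod.lift (𝟙 r) f) (hy : ay = ey.hom ≫ prod.lift f (𝟙 r)) :
    idRel r ≤ Subobject.mk (image.ι (prod.lift
      (pullback.fst (ax ≫ prod.snd) (ay ≫ prod.fst) ≫ ax ≫ prod.fst)
      (pullback.snd (ax ≫ prod.snd) (ay ≫ prod.fst) ≫ ay ≫ prod.snd))) := by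
  refine idRel_le_mk_image _ (pullback.lift ex.inv ey.inv ?_) ?_
  · rw [hx, hy]
    simp [prod.lift_fst, prod.lift_snd, prod.lift_fst_assoc, prod.lift_snd_assoc]
  · apply Limits.prod.hom_ext
    · simp only [Category.assoc, prod.lift_fst, pullback.lift_fst_assoc]
      rw [hx]
      simp [prod.lift_fst, prod.lift_snd, prod.lift_fst_assoc, prod.lift_snd_assoc]
    · simp only [Category.assoc, prod.lift_snd, pullback.lift_snd_assoc]
      rw [hy]
      simp [prod.lift_fst, prod.lift_snd, prod.lift_fst_assoc, prod.lift_snd_assoc]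

lemma cond_two {r s X Y : C} (f : r ⟶ s) (ax : X ⟶ r ⨯ s) (ay : Y ⟶ s ⨯ r)
    (ex : X ≅ r) (ey : Y ≅ r)
    (hx : ax = ex.hom ≫ prod.lift (𝟙 r) f) (hy : ay = ey.hom ≫ prod.lift f (𝟙 r)) :
    Subobject.mk (image.ι (prod.lift
      (pullback.fst (ay ≫ prod.snd) (ax ≫ prod.fst) ≫ ay ≫ prod.fst)
      (pullback.snd (ay ≫ prod.snd) (ax ≫ prod.fst) ≫ ax ≫ prod.snd))) ≤ idRel s := by
  apply mk_image_le_idRel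
  have hpb := pullback.condition (f := ay ≫ prod.snd) (g := ax ≫ prod.fst)
  rw [prod.lift_fst, prod.lift_snd]
  have h1 : ay ≫ prod.fst = (ay ≫ prod.snd) ≫ f := by rw [hy]; simp [prod.lift_fst, prod.lift_snd, prod.lift_fst_assoc, prod.lift_snd_assoc]
  have h2 : ax ≫ prod.snd = (ax ≫ prod.fst) ≫ f := by rw [hx]; simp [prod.lift_fst, prod.lift_snd, prod.lift_fst_assoc, prod.lift_snd_assoc]
  rw [h1, h2]
  simp only [Category.assoc]
  rw [reassoc_of% hpb]

end Aux

end RegularLogic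

open RegularLogic RegularLogic.Aux

set_option maxHeartbeats 1000000 in
/-- Fundamental lemma of regular categories: a relation `x ⊆ r ⨯ s` is a left adjoint in
the relations po-category `Rel(C)` if and only if it is the graph of a unique morphism
`f : r ⟶ s`.  (Hence the regular category is recovered, identity-on-objects, as the
category of left adjoints in `Rel(C)`.) -/
theorem statement11 {C : Type u} [Category.{v} C] [HasFiniteLimits C] [HasImages C]
    [hker : ∀ {X Y : C} (f : X ⟶ Y), HasCoequalizer (pullback.fst f f) (pullback.snd f f)]
    (hstab : ∀ {X Y Z : C} (f : X ⟶ Y) (g : Z ⟶ Y),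
      Nonempty (RegularEpi f) → Nonempty (RegularEpi (pullback.snd f g)))
    {r s : C} (x : Subobject (r ⨯ s)) :
    (∃ y : Subobject (s ⨯ r), idRel r ≤ relComp x y ∧ relComp y x ≤ idRel s) ↔
    ∃! f : r ⟶ s, x = graphRel f := by
  constructor
  · rintro ⟨y, h1, h2⟩
    simp only [relComp] at h1 h2
    have hsv := eq_of_mk_image_le_idRel _ h2
    rw [prod.lift_fst, prod.lift_snd] at hsv
    obtain ⟨f, hpf, hiso⟩ := main_construction (x.arrow ≫ prod.fst)
      (x.arrow ≫ prod.snd) (y.arrow ≫ prod.fst) (y.arrow ≫ prod.snd) hstab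
      (exists_of_idRel_le_mk_image _ h1) hsv
    have hfact : (x.arrow ≫ prod.fst) ≫ prod.lift (𝟙 r) f = x.arrow := by
      apply Limits.prod.hom_ext
      · rw [Category.assoc, prod.lift_fst, Category.comp_id]
      · rw [Category.assoc, prod.lift_snd, hpf]
    haveI hmono : Mono (x.arrow ≫ prod.fst) := mono_of_mono_fac hfact
    haveI : IsIso (x.arrow ≫ prod.fst) := hiso hmono
    have hxf : x = graphRel f := by
      conv_lhs => rw [← Subobject.mk_arrow x]
      simp only [graphRel]
      refine le_antisymm (Subobject.mk_le_mk_of_comm _ hfact)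
        (Subobject.mk_le_mk_of_comm (inv (x.arrow ≫ prod.fst)) ?_)
      rw [IsIso.inv_comp_eq]
      exact hfact.symm
    refine ⟨f, hxf, fun g hg => ?_⟩
    have hgf : graphRel g = graphRel f := hg.symm.trans hxf
    simp only [graphRel] at hgf
    have hk := Subobject.ofMkLEMk_comp hgf.le
    have e1 := hk =≫ prod.fst
    have e2 := hk =≫ prod.snd
    simp only [Category.assoc, prod.lift_fst, prod.lift_snd, Category.comp_id] at e1 e2
    rw [← e2, e1, Category.id_comp]
  · rintro ⟨f, hf, -⟩
    subst hf
    refine ⟨cographRel f, ?_, ?_⟩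
    · simp only [relComp, graphRel, cographRel]
      exact cond_one f _ _ (Subobject.underlyingIso _) (Subobject.underlyingIso _)
        (Subobject.underlyingIso_hom_comp_eq_mk _).symm
        (Subobject.underlyingIso_hom_comp_eq_mk _).symm
    · simp only [relComp, graphRel, cographRel]
      exact cond_two f _ _ (Subobject.underlyingIso _) (Subobject.underlyingIso _)
        (Subobject.underlyingIso_hom_comp_eq_mk _).symm
        (Subobject.underlyingIso_hom_comp_eq_mk _).symm
end

section
/- If R ⟶ T ⟵ S are regular functors between regular categories, then the comma category (R ↓ S) is regular, and the projection functor (R ↓ S) ⟶ R × S preserves and reflects finite limits and regular epimorphisms. -/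
open CategoryTheory CategoryTheory.Limits

universe v₁ v₂ v₃ u₁ u₂ u₃

namespace Statement16Aux

section General

variable {C : Type*} [Category C]

/-- A regular epi composed with an isomorphism is a regular epi. -/
noncomputable def regularEpiCompIso {X Y Z : C} (f : X ⟶ Y) (g : Y ⟶ Z) (hf : RegularEpi f)
    [IsIso g] : RegularEpi (f ≫ g) where
  W := hf.W
  left := hf.left
  right := hf.right
  w := by rw [reassoc_of% hf.w]
  isColimit := Cofork.IsColimit.mk _
    (fun s => inv g ≫ (hf.desc' s.π s.condition).1)
    (fun s => by
      rw [Cofork.π_ofπ, Category.assoc, IsIso.hom_inv_id_assoc]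
      exact (hf.desc' s.π s.condition).2)
    (fun s m hm => by
      haveI := RegularEpi.epi f hf
      rw [← cancel_epi (f ≫ g)]
      rw [Cofork.π_ofπ] at hm
      rw [hm, Category.assoc, IsIso.hom_inv_id_assoc]
      exact ((hf.desc' s.π s.condition).2).symm)

/-- An isomorphism composed with a regular epi is a regular epi. -/
noncomputable def regularEpiIsoComp {X Y Z : C} (f : X ⟶ Y) (g : Y ⟶ Z) [IsIso f]
    (hg : RegularEpi g) : RegularEpi (f ≫ g) where
  W := hg.W
  left := hg.left ≫ inv f
  right := hg.right ≫ inv f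
  w := by simp [hg.w]
  isColimit := Cofork.IsColimit.mk _
    (fun s => (hg.desc' (inv f ≫ s.π) (by
      have := s.condition
      simp only [Category.assoc] at this ⊢
      exact this)).1)
    (fun s => by
      rw [Cofork.π_ofπ, Category.assoc, (hg.desc' (inv f ≫ s.π) _).2,
        IsIso.hom_inv_id_assoc])
    (fun s m hm => by
      haveI := RegularEpi.epi g hg
      rw [← cancel_epi (f ≫ g)]
      rw [Cofork.π_ofπ] at hm
      rw [hm, Category.assoc, (hg.desc' (inv f ≫ s.π) _).2,
        IsIso.hom_inv_id_assoc])

end General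

section Prod

variable {C : Type*} {D : Type*} [Category C] [Category D]

theorem epi_fst_of_prod {P Q : C × D} (f : P ⟶ Q) [Epi f] : Epi f.1 := by
  constructor
  intro Z a b hab
  have : f ≫ ((a, 𝟙 Q.2) : Q ⟶ (Z, Q.2)) = f ≫ ((b, 𝟙 Q.2) : Q ⟶ (Z, Q.2)) := by
    apply Prod.ext
    · exact hab
    · rfl
  have := (cancel_epi f).1 this
  exact congrArg Prod.fst this

theorem epi_snd_of_prod {P Q : C × D} (f : P ⟶ Q) [Epi f] : Epi f.2 := by
  constructor
  intro Z a b hab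
  have : f ≫ ((𝟙 Q.1, a) : Q ⟶ (Q.1, Z)) = f ≫ ((𝟙 Q.1, b) : Q ⟶ (Q.1, Z)) := by
    apply Prod.ext
    · rfl
    · exact hab
  have := (cancel_epi f).1 this
  exact congrArg Prod.snd this

theorem prod_epi {P Q : C × D} (f : P ⟶ Q) (h1 : Epi f.1) (h2 : Epi f.2) : Epi f := by
  constructor
  intro Z a b hab
  apply Prod.ext
  · exact (cancel_epi f.1).1 (congrArg Prod.fst hab)
  · exact (cancel_epi f.2).1 (congrArg Prod.snd hab)

/-- A pair of regular epis gives a regular epi in the product category. -/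
noncomputable def prodRegularEpi {P Q : C × D} (f : P ⟶ Q) (h1 : RegularEpi f.1)
    (h2 : RegularEpi f.2) : RegularEpi f where
  W := (h1.W, h2.W)
  left := (h1.left, h2.left)
  right := (h1.right, h2.right)
  w := Prod.ext h1.w h2.w
  isColimit := Cofork.IsColimit.mk _
    (fun s => ((h1.desc' s.π.1 (congrArg Prod.fst s.condition)).1,
        (h2.desc' s.π.2 (congrArg Prod.snd s.condition)).1))
    (fun s => Prod.ext (h1.desc' s.π.1 _).2 (h2.desc' s.π.2 _).2)
    (fun s m hm => by
      haveI : Epi f := prod_epi f (RegularEpi.epi _ h1) (RegularEpi.epi _ h2)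
      rw [← cancel_epi f]
      rw [Cofork.π_ofπ] at hm
      rw [hm]
      exact (Prod.ext (h1.desc' s.π.1 _).2 (h2.desc' s.π.2 _).2).symm)

/-- The first component of a regular epi in a product category is a regular epi. -/
noncomputable def regularEpiFstOfProd {P Q : C × D} (f : P ⟶ Q) (r : RegularEpi f) :
    RegularEpi f.1 where
  W := r.W.1
  left := r.left.1
  right := r.right.1
  w := congrArg Prod.fst r.w
  isColimit := by
    haveI : Epi f := RegularEpi.epi f r
    haveI : Epi f.1 := epi_fst_of_prod f
    refine Cofork.IsColimit.mk _ (fun s => ?_) (fun s => ?_) (fun s m hm => ?_)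
    · refine ((Cofork.IsColimit.desc' r.isColimit ((s.π, f.2) : P ⟶ (s.pt, Q.2)) ?_).1).1
      have h1 : r.left.1 ≫ s.π = r.right.1 ≫ s.π := s.condition
      have h2 : r.left.2 ≫ f.2 = r.right.2 ≫ f.2 := congrArg Prod.snd r.w
      exact Prod.ext h1 h2
    · exact congrArg Prod.fst (Cofork.IsColimit.desc' r.isColimit _ _).2
    · rw [← cancel_epi f.1]
      rw [Cofork.π_ofπ] at hm
      rw [hm]
      exact (congrArg Prod.fst (Cofork.IsColimit.desc' r.isColimit
        ((s.π, f.2) : P ⟶ (s.pt, Q.2)) _).2).symm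

/-- The second component of a regular epi in a product category is a regular epi. -/
noncomputable def regularEpiSndOfProd {P Q : C × D} (f : P ⟶ Q) (r : RegularEpi f) :
    RegularEpi f.2 where
  W := r.W.2
  left := r.left.2
  right := r.right.2
  w := congrArg Prod.snd r.w
  isColimit := by
    haveI : Epi f := RegularEpi.epi f r
    haveI : Epi f.2 := epi_snd_of_prod f
    refine Cofork.IsColimit.mk _ (fun s => ?_) (fun s => ?_) (fun s m hm => ?_)
    · refine ((Cofork.IsColimit.desc' r.isColimit ((f.1, s.π) : P ⟶ (Q.1, s.pt)) ?_).1).2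
      have h1 : r.left.1 ≫ f.1 = r.right.1 ≫ f.1 := congrArg Prod.fst r.w
      have h2 : r.left.2 ≫ s.π = r.right.2 ≫ s.π := s.condition
      exact Prod.ext h1 h2
    · exact congrArg Prod.snd (Cofork.IsColimit.desc' r.isColimit _ _).2
    · rw [← cancel_epi f.2]
      rw [Cofork.π_ofπ] at hm
      rw [hm]
      exact (congrArg Prod.snd (Cofork.IsColimit.desc' r.isColimit
        ((f.1, s.π) : P ⟶ (Q.1, s.pt)) _).2).symm

/-- A cone in a product category whose two projections are limit cones is a limit cone. -/
def prodIsLimit {J : Type*} [Category J] {K : J ⥤ C × D} (c : Cone K)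
    (h1 : IsLimit ((CategoryTheory.Prod.fst C D).mapCone c))
    (h2 : IsLimit ((CategoryTheory.Prod.snd C D).mapCone c)) : IsLimit c where
  lift s := (h1.lift ((CategoryTheory.Prod.fst C D).mapCone s),
    h2.lift ((CategoryTheory.Prod.snd C D).mapCone s))
  fac s j := Prod.ext (h1.fac ((CategoryTheory.Prod.fst C D).mapCone s) j)
    (h2.fac ((CategoryTheory.Prod.snd C D).mapCone s) j)
  uniq s m hm := Prod.ext
    (h1.uniq ((CategoryTheory.Prod.fst C D).mapCone s) m.1
      (fun j => congrArg Prod.fst (hm j)))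
    (h2.uniq ((CategoryTheory.Prod.snd C D).mapCone s) m.2
      (fun j => congrArg Prod.snd (hm j)))

end Prod

section CommaCat

variable {R : Type u₁} {S : Type u₂} {T : Type u₃}
  [Category.{v₁} R] [Category.{v₂} S] [Category.{v₃} T]
  [HasFiniteLimits R] [HasFiniteLimits S] [HasFiniteLimits T]
  (F : R ⥤ T) (G : S ⥤ T) [PreservesFiniteLimits F] [PreservesFiniteLimits G]

theorem comma_epi {X Y : Comma F G} (f : X ⟶ Y) (h1 : Epi f.left) (h2 : Epi f.right) :
    Epi f := by
  constructor
  intro Z a b hab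
  have hl := congrArg CommaMorphism.left hab
  have hr := congrArg CommaMorphism.right hab
  rw [Comma.comp_left, Comma.comp_left] at hl
  rw [Comma.comp_right, Comma.comp_right] at hr
  ext
  · exact (cancel_epi f.left).1 hl
  · exact (cancel_epi f.right).1 hr

variable {X Y Z : Comma F G}

/-- The componentwise pullback as an object of the comma category. -/
noncomputable def kObj (f : X ⟶ Y) (g : Z ⟶ Y) : Comma F G where
  left := pullback f.left g.left
  right := pullback f.right g.right
  hom := pullback.lift (F.map (pullback.fst f.left g.left) ≫ X.hom)
      (F.map (pullback.snd f.left g.left) ≫ Z.hom)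
      (by rw [Category.assoc, Category.assoc, ← f.w, ← g.w, ← F.map_comp_assoc,
        ← F.map_comp_assoc, pullback.condition]) ≫
    inv (pullbackComparison G f.right g.right)

lemma kObj_hom_fst (f : X ⟶ Y) (g : Z ⟶ Y) :
    (kObj F G f g).hom ≫ G.map (pullback.fst f.right g.right) =
      F.map (pullback.fst f.left g.left) ≫ X.hom := by
  have h : inv (pullbackComparison G f.right g.right) ≫ G.map (pullback.fst f.right g.right) =
      pullback.fst (G.map f.right) (G.map g.right) := by
    rw [IsIso.inv_comp_eq, pullbackComparison_comp_fst]
  dsimp only [kObj]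
  rw [Category.assoc, h, pullback.lift_fst]

lemma kObj_hom_snd (f : X ⟶ Y) (g : Z ⟶ Y) :
    (kObj F G f g).hom ≫ G.map (pullback.snd f.right g.right) =
      F.map (pullback.snd f.left g.left) ≫ Z.hom := by
  have h : inv (pullbackComparison G f.right g.right) ≫ G.map (pullback.snd f.right g.right) =
      pullback.snd (G.map f.right) (G.map g.right) := by
    rw [IsIso.inv_comp_eq, pullbackComparison_comp_snd]
  dsimp only [kObj]
  rw [Category.assoc, h, pullback.lift_snd]

/-- The first projection of the componentwise pullback. -/
noncomputable def kFst (f : X ⟶ Y) (g : Z ⟶ Y) : kObj F G f g ⟶ X where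
  left := pullback.fst f.left g.left
  right := pullback.fst f.right g.right
  w := (kObj_hom_fst F G f g).symm

/-- The second projection of the componentwise pullback. -/
noncomputable def kSnd (f : X ⟶ Y) (g : Z ⟶ Y) : kObj F G f g ⟶ Z where
  left := pullback.snd f.left g.left
  right := pullback.snd f.right g.right
  w := (kObj_hom_snd F G f g).symm

lemma kComm (f : X ⟶ Y) (g : Z ⟶ Y) : kFst F G f g ≫ f = kSnd F G f g ≫ g := by
  ext
  · exact pullback.condition
  · exact pullback.condition

/-- The componentwise pullback is a pullback in the comma category. -/
theorem kIsPullback (f : X ⟶ Y) (g : Z ⟶ Y) :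
    IsPullback (kFst F G f g) (kSnd F G f g) f g := by
  refine IsPullback.of_isLimit (c := PullbackCone.mk _ _ (kComm F G f g)) ?_
  refine PullbackCone.IsLimit.mk _ (fun s => ?_) (fun s => ?_) (fun s => ?_)
    (fun s m hm1 hm2 => ?_)
  · -- the lift
    have hcl : s.fst.left ≫ f.left = s.snd.left ≫ g.left := by
      have := congrArg CommaMorphism.left s.condition
      rwa [Comma.comp_left, Comma.comp_left] at this
    have hcr : s.fst.right ≫ f.right = s.snd.right ≫ g.right := by
      have := congrArg CommaMorphism.right s.condition
      rwa [Comma.comp_right, Comma.comp_right] at this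
    refine ⟨pullback.lift s.fst.left s.snd.left hcl, pullback.lift s.fst.right s.snd.right hcr,
      ?_⟩
    dsimp only [kObj]
    rw [← cancel_mono (pullbackComparison G f.right g.right)]
    simp only [Category.assoc, IsIso.inv_hom_id, Category.comp_id]
    apply pullback.hom_ext
    · simp only [Category.assoc, pullbackComparison_comp_fst, pullback.lift_fst]
      rw [← F.map_comp_assoc, pullback.lift_fst, s.fst.w, ← G.map_comp,
        pullback.lift_fst]
    · simp only [Category.assoc, pullbackComparison_comp_snd, pullback.lift_snd]
      rw [← F.map_comp_assoc, pullback.lift_snd, s.snd.w, ← G.map_comp,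
        pullback.lift_snd]
  · ext
    · exact pullback.lift_fst _ _ _
    · exact pullback.lift_fst _ _ _
  · ext
    · exact pullback.lift_snd _ _ _
    · exact pullback.lift_snd _ _ _
  · have h1l := congrArg CommaMorphism.left hm1
    have h1r := congrArg CommaMorphism.right hm1
    have h2l := congrArg CommaMorphism.left hm2
    have h2r := congrArg CommaMorphism.right hm2
    rw [Comma.comp_left] at h1l h2l
    rw [Comma.comp_right] at h1r h2r
    ext
    · apply pullback.hom_ext
      · rw [pullback.lift_fst]; exact h1l
      · rw [pullback.lift_snd]; exact h2l
    · apply pullback.hom_ext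
      · rw [pullback.lift_fst]; exact h1r
      · rw [pullback.lift_snd]; exact h2r

variable
  [hkerR : ∀ {A B : R} (f : A ⟶ B), HasCoequalizer (pullback.fst f f) (pullback.snd f f)]
  [hkerS : ∀ {A B : S} (f : A ⟶ B), HasCoequalizer (pullback.fst f f) (pullback.snd f f)]

/-- The key construction: the coequalizer of the componentwise kernel pair of `f`,
together with the comparison to the codomain. -/
theorem key (hFepi : ∀ {A B : R} (f : A ⟶ B),
      Nonempty (RegularEpi f) → Nonempty (RegularEpi (F.map f)))
    (f : X ⟶ Y) :
    ∃ (Zc : Comma F G) (qc : X ⟶ Zc) (mc : Zc ⟶ Y)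
      (h : kFst F G f f ≫ qc = kSnd F G f f ≫ qc),
      qc ≫ mc = f ∧ Nonempty (RegularEpi qc.left) ∧ Nonempty (RegularEpi qc.right) ∧
      Nonempty (IsColimit (Cofork.ofπ qc h)) := by
  haveI := hkerR f.left
  haveI := hkerS f.right
  set pl1 := pullback.fst f.left f.left with hpl1
  set pl2 := pullback.snd f.left f.left with hpl2
  set pr1 := pullback.fst f.right f.right with hpr1
  set pr2 := pullback.snd f.right f.right with hpr2
  set q : X.left ⟶ coequalizer pl1 pl2 := coequalizer.π pl1 pl2 with hq
  set q' : X.right ⟶ coequalizer pr1 pr2 := coequalizer.π pr1 pr2 with hq'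
  have hm : q ≫ coequalizer.desc f.left pullback.condition = f.left := coequalizer.π_desc _ _
  have hm' : q' ≫ coequalizer.desc f.right pullback.condition = f.right :=
    coequalizer.π_desc _ _
  set m := coequalizer.desc f.left pullback.condition with hmdef
  set m' := coequalizer.desc f.right pullback.condition with hm'def
  -- kernel pair facts
  have hkp : IsKernelPair f.left pl1 pl2 := IsPullback.of_hasPullback f.left f.left
  have hkq : IsKernelPair q pl1 pl2 := by
    apply IsKernelPair.cancel_right (f₂ := m) (coequalizer.condition pl1 pl2)
    rwa [hm]
  have hkFq : IsKernelPair (F.map q) (F.map pl1) (F.map pl2) := hkq.map F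
  obtain ⟨rq⟩ := hFepi q ⟨coequalizerRegular pl1 pl2⟩
  haveI : Epi (F.map q) := RegularEpi.epi _ rq
  have hcoeqFq : IsColimit (Cofork.ofπ (F.map q) hkFq.w) := IsKernelPair.toCoequalizer hkFq rq
  -- the map β
  have cond2 : F.map pl1 ≫ (X.hom ≫ G.map q') = F.map pl2 ≫ (X.hom ≫ G.map q') := by
    have w1 : F.map pl1 ≫ X.hom = (kObj F G f f).hom ≫ G.map pr1 := (kFst F G f f).w
    have w2 : F.map pl2 ≫ X.hom = (kObj F G f f).hom ≫ G.map pr2 := (kSnd F G f f).w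
    rw [← Category.assoc, w1, ← Category.assoc, w2]
    exact (Category.assoc _ _ _).trans ((congrArg (fun k => (kObj F G f f).hom ≫ k)
      ((G.map_comp _ _).symm.trans ((congrArg G.map (coequalizer.condition pr1 pr2)).trans
      (G.map_comp _ _)))).trans (Category.assoc _ _ _).symm)
  obtain ⟨β, hβ⟩ := Cofork.IsColimit.desc' hcoeqFq (X.hom ≫ G.map q') cond2
  rw [Cofork.π_ofπ] at hβ
  have hrq : RegularEpi q := coequalizerRegular pl1 pl2
  have hrq' : RegularEpi q' := coequalizerRegular pr1 pr2
  -- the comma objects and morphisms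
  refine ⟨⟨coequalizer pl1 pl2, coequalizer pr1 pr2, β⟩,
    ⟨q, q', hβ⟩, ⟨m, m', ?_⟩, ?_, ?_, ?_, ?_, ?_⟩
  · -- w condition for mc
    show F.map m ≫ Y.hom = β ≫ G.map m'
    rw [← cancel_epi (F.map q), ← F.map_comp_assoc, hm, f.w, ← Category.assoc, hβ,
      Category.assoc, ← G.map_comp, hm']
  · -- h
    ext
    · exact coequalizer.condition pl1 pl2
    · exact coequalizer.condition pr1 pr2
  · -- qc ≫ mc = f
    ext
    · exact hm
    · exact hm'
  · exact ⟨hrq⟩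
  · exact ⟨hrq'⟩
  · -- the colimit
    constructor
    refine Cofork.IsColimit.mk _ (fun s => ?_) (fun s => ?_) (fun s m'' hm'' => ?_)
    · -- desc
      have condl : pl1 ≫ s.π.left = pl2 ≫ s.π.left := by
        have := congrArg CommaMorphism.left s.condition
        rwa [Comma.comp_left, Comma.comp_left] at this
      have condr : pr1 ≫ s.π.right = pr2 ≫ s.π.right := by
        have := congrArg CommaMorphism.right s.condition
        rwa [Comma.comp_right, Comma.comp_right] at this
      refine ⟨coequalizer.desc s.π.left condl, coequalizer.desc s.π.right condr, ?_⟩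
      have hw := s.π.w
      show F.map (coequalizer.desc s.π.left condl) ≫ s.pt.hom =
        β ≫ G.map (coequalizer.desc s.π.right condr)
      rw [← cancel_epi (F.map q), ← F.map_comp_assoc, coequalizer.π_desc,
        hw, ← Category.assoc, hβ, Category.assoc, ← G.map_comp, coequalizer.π_desc]
    · -- fac
      ext
      · exact coequalizer.π_desc _ _
      · exact coequalizer.π_desc _ _
    · -- uniq
      have hl := congrArg CommaMorphism.left hm''
      have hr := congrArg CommaMorphism.right hm''
      rw [Comma.comp_left] at hl
      rw [Comma.comp_right] at hr
      ext
      · apply coequalizer.hom_ext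
        dsimp only
        exact hl.trans (coequalizer.π_desc _ _).symm
      · apply coequalizer.hom_ext
        dsimp only
        exact hr.trans (coequalizer.π_desc _ _).symm

/-- A regular epi in the comma category has regular epi components. -/
theorem left_right_of_regular
    (hFepi : ∀ {A B : R} (f : A ⟶ B),
      Nonempty (RegularEpi f) → Nonempty (RegularEpi (F.map f)))
    (f : X ⟶ Y) (hf : Nonempty (RegularEpi f)) :
    Nonempty (RegularEpi f.left) ∧ Nonempty (RegularEpi f.right) := by
  obtain ⟨rf⟩ := hf
  haveI := RegularEpi.epi f rf
  have hco : IsColimit (Cofork.ofπ f (kIsPullback F G f f).w) :=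
    IsKernelPair.toCoequalizer (kIsPullback F G f f) rf
  obtain ⟨Zc, qc, mc, h, hqm, ⟨rl⟩, ⟨rr⟩, ⟨hcolim⟩⟩ := key F G hFepi f
  haveI := RegularEpi.epi _ rl; haveI := RegularEpi.epi _ rr
  obtain ⟨t, ht⟩ := Cofork.IsColimit.desc' hco qc h
  rw [Cofork.π_ofπ] at ht
  have htm : t ≫ mc = 𝟙 Y := by
    rw [← cancel_epi f, ← Category.assoc, ht, hqm, Category.comp_id]
  have hmt : mc ≫ t = 𝟙 Zc := by
    have hql : Epi qc.left := inferInstance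
    have hqr : Epi qc.right := inferInstance
    have e1 : qc ≫ mc ≫ t = qc := by
      rw [← Category.assoc, hqm, ← ht]
    have e1l := congrArg CommaMorphism.left e1
    have e1r := congrArg CommaMorphism.right e1
    rw [Comma.comp_left, Comma.comp_left] at e1l
    rw [Comma.comp_right, Comma.comp_right] at e1r
    ext
    · exact (cancel_epi qc.left).1
        (by simp only [Comma.comp_left, Comma.id_left, Category.comp_id]; exact e1l)
    · exact (cancel_epi qc.right).1
        (by simp only [Comma.comp_right, Comma.id_right, Category.comp_id]; exact e1r)
  -- components of mc are isos
  have hmtl := congrArg CommaMorphism.left hmt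
  have html := congrArg CommaMorphism.left htm
  have hmtr := congrArg CommaMorphism.right hmt
  have htmr := congrArg CommaMorphism.right htm
  rw [Comma.comp_left, Comma.id_left] at hmtl
  rw [Comma.comp_left, Comma.id_left] at html
  rw [Comma.comp_right, Comma.id_right] at hmtr
  rw [Comma.comp_right, Comma.id_right] at htmr
  haveI : IsIso mc.left := ⟨t.left, hmtl, html⟩
  haveI : IsIso mc.right := ⟨t.right, hmtr, htmr⟩
  have hql := congrArg CommaMorphism.left hqm
  have hqr := congrArg CommaMorphism.right hqm
  rw [Comma.comp_left] at hql
  rw [Comma.comp_right] at hqr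
  exact ⟨⟨hql ▸ regularEpiCompIso qc.left mc.left rl⟩, ⟨hqr ▸ regularEpiCompIso qc.right mc.right rr⟩⟩

/-- A morphism of the comma category with regular epi components is a regular epi. -/
theorem regular_of_components
    (hFepi : ∀ {A B : R} (f : A ⟶ B),
      Nonempty (RegularEpi f) → Nonempty (RegularEpi (F.map f)))
    (f : X ⟶ Y) (hl : Nonempty (RegularEpi f.left)) (hr : Nonempty (RegularEpi f.right)) :
    Nonempty (RegularEpi f) := by
  obtain ⟨rl⟩ := hl
  obtain ⟨rr⟩ := hr
  haveI := RegularEpi.epi _ rl; haveI := RegularEpi.epi _ rr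
  obtain ⟨rFl⟩ := hFepi f.left ⟨rl⟩
  haveI := RegularEpi.epi _ rFl
  have hcoL : IsColimit (Cofork.ofπ f.left (IsPullback.of_hasPullback f.left f.left).w) :=
    IsKernelPair.toCoequalizer (IsPullback.of_hasPullback f.left f.left) rl
  have hcoR : IsColimit (Cofork.ofπ f.right (IsPullback.of_hasPullback f.right f.right).w) :=
    IsKernelPair.toCoequalizer (IsPullback.of_hasPullback f.right f.right) rr
  refine ⟨⟨kObj F G f f, kFst F G f f, kSnd F G f f, kComm F G f f, ?_⟩⟩
  refine Cofork.IsColimit.mk _ (fun s => ?_) (fun s => ?_) (fun s m hm => ?_)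
  · -- desc
    have condl : pullback.fst f.left f.left ≫ s.π.left =
        pullback.snd f.left f.left ≫ s.π.left := by
      have := congrArg CommaMorphism.left s.condition
      rwa [Comma.comp_left, Comma.comp_left] at this
    have condr : pullback.fst f.right f.right ≫ s.π.right =
        pullback.snd f.right f.right ≫ s.π.right := by
      have := congrArg CommaMorphism.right s.condition
      rwa [Comma.comp_right, Comma.comp_right] at this
    obtain ⟨dl, hdl⟩ := Cofork.IsColimit.desc' hcoL s.π.left condl
    obtain ⟨dr, hdr⟩ := Cofork.IsColimit.desc' hcoR s.π.right condr
    rw [Cofork.π_ofπ] at hdl hdr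
    refine ⟨dl, dr, ?_⟩
    have hw := s.π.w
    show F.map dl ≫ s.pt.hom = Y.hom ≫ G.map dr
    rw [← cancel_epi (F.map f.left), ← F.map_comp_assoc, hdl, hw, ← Category.assoc
      (F.map f.left), f.w, Category.assoc, ← G.map_comp, hdr]
  · -- fac
    ext
    · exact (Cofork.IsColimit.desc' hcoL _ _).2
    · exact (Cofork.IsColimit.desc' hcoR _ _).2
  · -- uniq
    haveI : Epi f := comma_epi F G f inferInstance inferInstance
    rw [← cancel_epi f]
    rw [Cofork.π_ofπ] at hm
    rw [hm]
    ext
    · exact ((Cofork.IsColimit.desc' hcoL _ _).2).symm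
    · exact ((Cofork.IsColimit.desc' hcoR _ _).2).symm

end CommaCat

end Statement16Aux

open Statement16Aux

/-- If `F : R ⥤ T` and `G : S ⥤ T` are regular functors between regular categories, then
the comma category `(F ↓ G)` is regular (it has finite limits, coequalizers of kernel
pairs, and pullback-stable regular epimorphisms), and the projection
`(F ↓ G) ⥤ R × S` preserves and reflects finite limits and regular epimorphisms. -/
theorem statement16 {R : Type u₁} {S : Type u₂} {T : Type u₃}
    [Category.{v₁} R] [Category.{v₂} S] [Category.{v₃} T]
    [HasFiniteLimits R] [HasFiniteLimits S] [HasFiniteLimits T]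
    [hkerR : ∀ {X Y : R} (f : X ⟶ Y), HasCoequalizer (pullback.fst f f) (pullback.snd f f)]
    [hkerS : ∀ {X Y : S} (f : X ⟶ Y), HasCoequalizer (pullback.fst f f) (pullback.snd f f)]
    [hkerT : ∀ {X Y : T} (f : X ⟶ Y), HasCoequalizer (pullback.fst f f) (pullback.snd f f)]
    (hstabR : ∀ {X Y Z : R} (f : X ⟶ Y) (g : Z ⟶ Y),
      Nonempty (RegularEpi f) → Nonempty (RegularEpi (pullback.snd f g)))
    (hstabS : ∀ {X Y Z : S} (f : X ⟶ Y) (g : Z ⟶ Y),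
      Nonempty (RegularEpi f) → Nonempty (RegularEpi (pullback.snd f g)))
    (hstabT : ∀ {X Y Z : T} (f : X ⟶ Y) (g : Z ⟶ Y),
      Nonempty (RegularEpi f) → Nonempty (RegularEpi (pullback.snd f g)))
    (F : R ⥤ T) (G : S ⥤ T)
    [PreservesFiniteLimits F] [PreservesFiniteLimits G]
    (hFepi : ∀ {X Y : R} (f : X ⟶ Y),
      Nonempty (RegularEpi f) → Nonempty (RegularEpi (F.map f)))
    (hGepi : ∀ {X Y : S} (f : X ⟶ Y),
      Nonempty (RegularEpi f) → Nonempty (RegularEpi (G.map f))) :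
    HasFiniteLimits (Comma F G) ∧
    (∀ {X Y : Comma F G} (f : X ⟶ Y),
      HasCoequalizer (pullback.fst f f) (pullback.snd f f)) ∧
    (∀ {X Y Z : Comma F G} (f : X ⟶ Y) (g : Z ⟶ Y),
      Nonempty (RegularEpi f) → Nonempty (RegularEpi (pullback.snd f g))) ∧
    Nonempty (PreservesFiniteLimits ((Comma.fst F G).prod' (Comma.snd F G))) ∧
    Nonempty (ReflectsFiniteLimits ((Comma.fst F G).prod' (Comma.snd F G))) ∧
    (∀ {X Y : Comma F G} (f : X ⟶ Y),
      Nonempty (RegularEpi f) ↔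
        Nonempty (RegularEpi (((Comma.fst F G).prod' (Comma.snd F G)).map f))) := by
  -- finite limits in the comma category
  haveI hFL : HasFiniteLimits (Comma F G) := ⟨fun J _ _ => inferInstance⟩
  -- the projections preserve finite limits
  haveI hfstP : ∀ (J : Type) [SmallCategory J] [FinCategory J],
      PreservesLimitsOfShape J (Comma.fst F G) := by
    intro J _ _
    constructor
    intro K
    apply preservesLimit_of_preserves_limit_cone
      (Comma.coneOfPreservesIsLimit K (limit.isLimit (K ⋙ Comma.fst F G))
        (limit.isLimit (K ⋙ Comma.snd F G)))
    exact IsLimit.ofIsoLimit (limit.isLimit (K ⋙ Comma.fst F G))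
      (Cones.ext (Iso.refl _) (fun j => by simp [Comma.coneOfPreserves]))
  haveI hsndP : ∀ (J : Type) [SmallCategory J] [FinCategory J],
      PreservesLimitsOfShape J (Comma.snd F G) := by
    intro J _ _
    constructor
    intro K
    apply preservesLimit_of_preserves_limit_cone
      (Comma.coneOfPreservesIsLimit K (limit.isLimit (K ⋙ Comma.fst F G))
        (limit.isLimit (K ⋙ Comma.snd F G)))
    exact IsLimit.ofIsoLimit (limit.isLimit (K ⋙ Comma.snd F G))
      (Cones.ext (Iso.refl _) (fun j => by simp [Comma.coneOfPreserves]))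
  set P := (Comma.fst F G).prod' (Comma.snd F G) with hP
  haveI hPP : ∀ (J : Type) [SmallCategory J] [FinCategory J],
      PreservesLimitsOfShape J P := by
    intro J _ _
    constructor
    intro K
    constructor
    intro c hc
    haveI := hfstP J
    haveI := hsndP J
    refine ⟨prodIsLimit (P.mapCone c) ?_ ?_⟩
    · exact isLimitOfPreserves (Comma.fst F G) hc
    · exact isLimitOfPreserves (Comma.snd F G) hc
  haveI hPpres : PreservesFiniteLimits P := ⟨fun J _ _ => hPP J⟩
  -- P reflects isomorphisms
  haveI hPrefliso : P.ReflectsIsomorphisms := by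
    constructor
    intro A B f hf
    haveI : IsIso (P.map f).1 := by
      haveI := hf
      exact inferInstanceAs (IsIso ((CategoryTheory.Prod.fst R S).map (P.map f)))
    haveI : IsIso (P.map f).2 := by
      haveI := hf
      exact inferInstanceAs (IsIso ((CategoryTheory.Prod.snd R S).map (P.map f)))
    haveI hil : IsIso f.left := by exact ‹IsIso (P.map f).1›
    haveI hir : IsIso f.right := by exact ‹IsIso (P.map f).2›
    refine ⟨⟨⟨inv f.left, inv f.right, ?_⟩, ?_, ?_⟩⟩
    · rw [← cancel_mono (G.map f.right), Category.assoc, Category.assoc, ← G.map_comp,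
        IsIso.inv_hom_id, G.map_id, Category.comp_id, ← f.w, ← F.map_comp_assoc,
        IsIso.inv_hom_id, F.map_id, Category.id_comp]
    · ext
      · simp
      · simp
    · ext
      · simp
      · simp
  -- items about regular epis
  have hI : ∀ {A B : Comma F G} (f : A ⟶ B), Nonempty (RegularEpi f) →
      Nonempty (RegularEpi f.left) ∧ Nonempty (RegularEpi f.right) :=
    fun f hf => left_right_of_regular F G (fun g hg => hFepi g hg) f hf
  have hII : ∀ {A B : Comma F G} (f : A ⟶ B), Nonempty (RegularEpi f.left) →
      Nonempty (RegularEpi f.right) → Nonempty (RegularEpi f) :=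
    fun f hl hr => regular_of_components F G (fun g hg => hFepi g hg) f hl hr
  refine ⟨hFL, ?_, ?_, ⟨hPpres⟩, ?_, ?_⟩
  · -- coequalizers of kernel pairs
    intro A B f
    obtain ⟨Zc, qc, mc, h, hqm, hl, hr, ⟨hcolim⟩⟩ :=
      key F G (fun g hg => hFepi g hg) f
    haveI : HasColimit (parallelPair (kFst F G f f) (kSnd F G f f)) :=
      HasColimit.mk ⟨Cofork.ofπ qc h, hcolim⟩
    obtain ⟨e, he1, he2⟩ : ∃ e : kObj F G f f ≅ pullback f f,
        e.hom ≫ pullback.fst f f = kFst F G f f ∧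
        e.hom ≫ pullback.snd f f = kSnd F G f f :=
      ⟨(kIsPullback F G f f).isoPullback, (kIsPullback F G f f).isoPullback_hom_fst,
        (kIsPullback F G f f).isoPullback_hom_snd⟩
    have iso : parallelPair (pullback.fst f f) (pullback.snd f f) ≅
        parallelPair (kFst F G f f) (kSnd F G f f) := by
      refine parallelPair.ext e.symm (Iso.refl A) ?_ ?_
      · dsimp
        rw [Category.comp_id, ← he1, Iso.inv_hom_id_assoc]
      · dsimp
        rw [Category.comp_id, ← he2, Iso.inv_hom_id_assoc]
    exact hasColimit_of_iso iso
  · -- stability of regular epis under pullback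
    intro A B Z f g hf
    obtain ⟨e, he2⟩ : ∃ e : kObj F G f g ≅ pullback f g,
        e.hom ≫ pullback.snd f g = kSnd F G f g :=
      ⟨(kIsPullback F G f g).isoPullback, (kIsPullback F G f g).isoPullback_hom_snd⟩
    have he : pullback.snd f g = e.inv ≫ kSnd F G f g := by
      rw [← he2, Iso.inv_hom_id_assoc]
    have hel := congrArg CommaMorphism.left he
    have her := congrArg CommaMorphism.right he
    rw [Comma.comp_left] at hel
    rw [Comma.comp_right] at her
    haveI : IsIso e.inv.left :=
      inferInstanceAs (IsIso ((Comma.fst F G).map e.inv))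
    haveI : IsIso e.inv.right :=
      inferInstanceAs (IsIso ((Comma.snd F G).map e.inv))
    obtain ⟨hfl, hfr⟩ := hI f hf
    obtain ⟨rsl⟩ := hstabR f.left g.left hfl
    obtain ⟨rsr⟩ := hstabS f.right g.right hfr
    haveI : RegularEpi (kSnd F G f g).left := rsl
    haveI : RegularEpi (kSnd F G f g).right := rsr
    have hL : RegularEpi ((pullback.snd f g).left) := by
      rw [hel]; exact regularEpiIsoComp e.inv.left (kSnd F G f g).left rsl
    have hR : RegularEpi ((pullback.snd f g).right) := by
      rw [her]; exact regularEpiIsoComp e.inv.right (kSnd F G f g).right rsr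
    exact hII (pullback.snd f g) ⟨hL⟩ ⟨hR⟩
  · -- reflects finite limits
    refine ⟨⟨fun J _ _ => ?_⟩⟩
    haveI := hPP J
    exact reflectsLimitsOfShape_of_reflectsIsomorphisms
  · -- regular epis are componentwise
    intro A B f
    constructor
    · intro hf
      obtain ⟨⟨rl⟩, ⟨rr⟩⟩ := hI f hf
      haveI : RegularEpi (P.map f).1 := rl
      haveI : RegularEpi (P.map f).2 := rr
      exact ⟨prodRegularEpi (P.map f) rl rr⟩
    · intro hf
      obtain ⟨r⟩ := hf
      haveI := r
      exact hII f ⟨regularEpiFstOfProd (P.map f) r⟩ ⟨regularEpiSndOfProd (P.map f) r⟩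
end

section
/- In the free regular category on a set T, realized as the comma category of the inclusion of the opposite of the finite-subsets poset of T into FinSet^op along the identity of FinSet^op, a morphism f : (n₁, S₁, τ₁) ⟶ (n₂, S₂, τ₂) is a monomorphism if and only if the underlying function of finite sets [n₂] ⟶ [n₁] is surjective, and is a regular epimorphism if and only if the underlying function [n₂] ⟶ [n₁] is injective and S₁ = S₂. -/
open CategoryTheory CategoryTheory.Limits

universe u

/-- An object of the free regular category on a set `T`: a context `(n, S, τ)` with
`n : ℕ`, `S` a finite subset of `T`, and a typing `τ : Fin n → S`. -/
structure Ctx (T : Type u) where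
  n : ℕ
  S : Finset T
  τ : Fin n → T
  τ_mem : ∀ i, τ i ∈ S

/-- A morphism of contexts `(n₁, S₁, τ₁) ⟶ (n₂, S₂, τ₂)`: a function
`Fin n₂ → Fin n₁` compatible with the typings, together with `S₂ ⊆ S₁`
(composition is opposite to that of `FinSet`). -/
@[ext]
structure CtxHom {T : Type u} (Γ₁ Γ₂ : Ctx T) where
  toFun : Fin Γ₂.n → Fin Γ₁.n
  comm : ∀ i, Γ₁.τ (toFun i) = Γ₂.τ i
  sub : Γ₂.S ⊆ Γ₁.S

instance (T : Type u) : Category (Ctx T) where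
  Hom := CtxHom
  id Γ := { toFun := id, comm := fun _ => rfl, sub := Finset.Subset.refl _ }
  comp f g :=
    { toFun := f.toFun ∘ g.toFun
      comm := fun i => (f.comm (g.toFun i)).trans (g.comm i)
      sub := fun a ha => f.sub (g.sub ha) }

namespace Statement17Aux

variable {T : Type u}

lemma hom_ext {Γ₁ Γ₂ : Ctx T} {g h : Γ₁ ⟶ Γ₂}
    (e : CtxHom.toFun g = CtxHom.toFun h) : g = h :=
  CtxHom.ext e

lemma comp_toFun {A B C : Ctx T} (g : A ⟶ B) (f : B ⟶ C) :
    CtxHom.toFun (g ≫ f) = CtxHom.toFun g ∘ CtxHom.toFun f := rfl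

lemma castAdd_ne_natAdd {n : ℕ} (x y : Fin n) :
    Fin.castAdd n x ≠ Fin.natAdd n y := by
  intro e
  have h := congrArg Fin.val e
  have hx := x.isLt
  simp [Fin.coe_castAdd, Fin.coe_natAdd] at h
  omega

/-- Doubling of a context. -/
def W (Γ : Ctx T) : Ctx T :=
  ⟨Γ.n + Γ.n, Γ.S, Fin.append Γ.τ Γ.τ, by
    intro i
    refine Fin.addCases (fun x => ?_) (fun x => ?_) i
    · rw [Fin.append_left]; exact Γ.τ_mem x
    · rw [Fin.append_right]; exact Γ.τ_mem x⟩

/-- The left inclusion. -/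
def inlW (Γ : Ctx T) : W Γ ⟶ Γ :=
  ⟨Fin.castAdd Γ.n, fun i => Fin.append_left _ _ _, Finset.Subset.refl _⟩

/-- Mixed inclusion depending on a predicate. -/
def mixW (Γ : Ctx T) (p : Fin Γ.n → Prop) [DecidablePred p] : W Γ ⟶ Γ :=
  ⟨fun x => if p x then Fin.castAdd Γ.n x else Fin.natAdd Γ.n x,
   fun i => by
     show Fin.append Γ.τ Γ.τ (if p i then Fin.castAdd Γ.n i else Fin.natAdd Γ.n i) = Γ.τ i
     split
     · exact Fin.append_left _ _ _
     · exact Fin.append_right _ _ _,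
   Finset.Subset.refl _⟩

end Statement17Aux

open Statement17Aux

/-- In the free regular category on a set `T` (described concretely via contexts), a
morphism `f : (n₁, S₁, τ₁) ⟶ (n₂, S₂, τ₂)` is a monomorphism iff its underlying function
`Fin n₂ → Fin n₁` is surjective, and a regular epimorphism iff the underlying function is
injective and `S₁ = S₂`. -/
theorem statement17 {T : Type u} {Γ₁ Γ₂ : Ctx T} (f : Γ₁ ⟶ Γ₂) :
    (Mono f ↔ Function.Surjective (CtxHom.toFun f)) ∧
    (Nonempty (RegularEpi f) ↔ (Function.Injective (CtxHom.toFun f) ∧ Γ₁.S = Γ₂.S)) := by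
  classical
  set u := CtxHom.toFun f with hu
  constructor
  · constructor
    · -- Mono → surjective
      intro hm
      by_contra hns
      rw [Function.Surjective] at hns
      push_neg at hns
      obtain ⟨j, hj⟩ := hns
      have hgh : inlW Γ₁ ≫ f = mixW Γ₁ (fun x => x ≠ j) ≫ f := by
        apply Statement17Aux.hom_ext
        funext i
        show Fin.castAdd Γ₁.n (u i) = if u i ≠ j then _ else _
        rw [if_pos (hj i)]
      have := hm.right_cancellation _ _ hgh
      have heq := congrFun (congrArg CtxHom.toFun this) j
      simp only [inlW, mixW] at heq
      simp only [ne_eq, not_true_eq_false, ↓reduceIte] at heq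
      exact castAdd_ne_natAdd j j heq
    · -- surjective → Mono
      intro hs
      refine ⟨fun g h e => hom_ext (funext fun x => ?_)⟩
      obtain ⟨y, rfl⟩ := hs x
      exact congrFun (congrArg CtxHom.toFun e) y
  · constructor
    · -- RegularEpi → injective ∧ S eq
      rintro ⟨re⟩
      haveI : RegularEpi f := re
      constructor
      · -- injective
        intro a b hab
        have hτ : Γ₂.τ a = Γ₂.τ b :=
          ((f.comm a).symm.trans (congrArg Γ₁.τ hab)).trans (f.comm b)
        let Y : Ctx T := ⟨1, Γ₂.S, fun _ => Γ₂.τ a, fun _ => Γ₂.τ_mem a⟩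
        let g : Γ₂ ⟶ Y := ⟨fun _ => a, fun _ => rfl, Finset.Subset.refl _⟩
        let h : Γ₂ ⟶ Y := ⟨fun _ => b, fun _ => hτ.symm, Finset.Subset.refl _⟩
        have e : f ≫ g = f ≫ h := by
          apply Statement17Aux.hom_ext
          funext i
          show u a = u b
          exact hab
        have := (RegularEpi.epi f re).left_cancellation _ _ e
        exact congrFun (congrArg CtxHom.toFun this) ⟨0, Nat.one_pos⟩
      · -- S₁ = S₂
        let Γ₂' : Ctx T := ⟨Γ₂.n, Γ₁.S, Γ₂.τ, fun i => f.sub (Γ₂.τ_mem i)⟩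
        let f' : Γ₁ ⟶ Γ₂' := ⟨u, f.comm, Finset.Subset.refl _⟩
        have hw : re.left ≫ f' = re.right ≫ f' := by
          apply Statement17Aux.hom_ext
          funext i
          exact congrFun (congrArg CtxHom.toFun re.w) i
        let k : Γ₂ ⟶ Γ₂' := Cofork.IsColimit.desc re.isColimit f' hw
        exact Finset.Subset.antisymm k.sub f.sub
    · -- injective ∧ S eq → RegularEpi
      rintro ⟨hinj, hS⟩
      have hw : inlW Γ₁ ≫ f = mixW Γ₁ (fun x => x ∈ Set.range u) ≫ f := by
        apply Statement17Aux.hom_ext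
        funext i
        show Fin.castAdd Γ₁.n (u i) = if u i ∈ Set.range u then _ else _
        rw [if_pos ⟨i, rfl⟩]
      have key : ∀ (Y : Ctx T) (π : Γ₁ ⟶ Y),
          inlW Γ₁ ≫ π = mixW Γ₁ (fun x => x ∈ Set.range u) ≫ π →
          ∀ i, ∃ j, u j = π.toFun i := by
        intro Y π hπ i
        have h1 := congrFun (congrArg CtxHom.toFun hπ) i
        by_contra hc
        push_neg at hc
        have : (π.toFun i ∈ Set.range u) = False := by
          simp only [eq_iff_iff, iff_false]
          rintro ⟨j, hj⟩; exact hc j hj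
        simp only [comp_toFun, Function.comp, inlW, mixW, this, if_false] at h1
        exact castAdd_ne_natAdd _ _ h1
      refine ⟨⟨W Γ₁, inlW Γ₁, mixW Γ₁ (fun x => x ∈ Set.range u), hw, ?_⟩⟩
      refine Cofork.IsColimit.mk _ (fun s => ?_) (fun s => ?_) (fun s m hm => ?_)
      · -- desc
        have hcond : inlW Γ₁ ≫ s.π = mixW Γ₁ (fun x => x ∈ Set.range u) ≫ s.π :=
          s.condition
        exact ⟨fun i => (key s.pt s.π hcond i).choose,
          fun i => by
            have hspec := (key s.pt s.π hcond i).choose_spec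
            calc Γ₂.τ _ = Γ₁.τ (u ((key s.pt s.π hcond i).choose)) := (f.comm _).symm
              _ = Γ₁.τ (s.π.toFun i) := by rw [hspec]
              _ = s.pt.τ i := s.π.comm i,
          fun a ha => hS ▸ s.π.sub ha⟩
      · -- fac
        apply Statement17Aux.hom_ext
        funext i
        show u ((key s.pt s.π s.condition i).choose) = s.π.toFun i
        exact (key s.pt s.π s.condition i).choose_spec
      · -- uniq
        apply Statement17Aux.hom_ext
        funext i
        apply hinj
        have h1 := congrFun (congrArg CtxHom.toFun hm) i
        have h2 := (key s.pt s.π s.condition i).choose_spec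
        exact h1.trans h2.symm
end

section
/- In a regular category, an object r with the canonical comonoid structure given by the diagonal δ : r ⟶ r × r and the unique map ε : r ⟶ 1 yields, upon passing to the relations po-category, an adjoint commutative monoid structure on r: the graph of δ and graph of ε are left adjoints, and their right adjoints (the cographs) equip r with a commutative monoid structure in Rel(R) whose structure maps are right adjoints. -/
open CategoryTheory CategoryTheory.Limits

attribute [local simp] prod.lift_fst prod.lift_snd prod.lift_fst_assoc prod.lift_snd_assoc

universe v u

variable {C : Type u} [Category.{v} C]

namespace RegularLogic

variable [HasFiniteLimits C] [HasImages C]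

/-- The tensor (monoidal product) of two relations in `Rel(C)`, as a subobject of
`(a ⨯ c) ⨯ (b ⨯ d)`: the meet of the pullbacks of `x` and `y` along the evident
projections. -/
noncomputable def relTensor {a b c d : C} (x : Subobject (a ⨯ b)) (y : Subobject (c ⨯ d)) :
    Subobject ((a ⨯ c) ⨯ (b ⨯ d)) :=
  (Subobject.pullback (prod.map (prod.fst : a ⨯ c ⟶ a) (prod.fst : b ⨯ d ⟶ b))).obj x ⊓
  (Subobject.pullback (prod.map (prod.snd : a ⨯ c ⟶ c) (prod.snd : b ⨯ d ⟶ d))).obj y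

end RegularLogic

open RegularLogic

namespace RegularLogic

variable [HasFiniteLimits C] [HasImages C]

omit [HasFiniteLimits C] [HasImages C] in
lemma mono_of_retraction {X Y : C} {k : X ⟶ Y} (rtr : Y ⟶ X) (h : k ≫ rtr = 𝟙 X) : Mono k :=
  ⟨fun g g' e => by
    rw [← Category.comp_id g, ← Category.comp_id g', ← h, ← Category.assoc, ← Category.assoc, e]⟩

lemma relComp_le_mk {r s t A B K : C} (m : A ⟶ r ⨯ s) (n : B ⟶ s ⨯ t) (k : K ⟶ r ⨯ t)
    [Mono m] [Mono n] [Mono k]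
    (up : ∀ {T : C} (p : T ⟶ A) (q : T ⟶ B), p ≫ m ≫ prod.snd = q ≫ n ≫ prod.fst →
      ∃ w : T ⟶ K, w ≫ k = prod.lift (p ≫ m ≫ prod.fst) (q ≫ n ≫ prod.snd)) :
    relComp (Subobject.mk m) (Subobject.mk n) ≤ Subobject.mk k := by
  have hm := reassoc_of% (Subobject.underlyingIso_hom_comp_eq_mk m)
  have hn := reassoc_of% (Subobject.underlyingIso_hom_comp_eq_mk n)
  set x := Subobject.mk m with hx
  set y := Subobject.mk n with hy
  obtain ⟨w, hw⟩ := up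
    (pullback.fst (x.arrow ≫ prod.snd) (y.arrow ≫ prod.fst) ≫ (Subobject.underlyingIso m).hom)
    (pullback.snd (x.arrow ≫ prod.snd) (y.arrow ≫ prod.fst) ≫ (Subobject.underlyingIso n).hom)
    (by
      simp only [Category.assoc, hm, hn]
      simpa using pullback.condition)
  simp only [Category.assoc, hm, hn] at hw
  rw [relComp]
  exact Subobject.mk_le_mk_of_comm
    (image.lift { I := K, m := k, e := w, fac := hw }) (image.lift_fac _)

lemma mk_le_relComp {r s t A B K : C} (m : A ⟶ r ⨯ s) (n : B ⟶ s ⨯ t) (k : K ⟶ r ⨯ t)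
    [Mono m] [Mono n] [Mono k] (p : K ⟶ A) (q : K ⟶ B)
    (hpq : p ≫ m ≫ prod.snd = q ≫ n ≫ prod.fst)
    (hk : prod.lift (p ≫ m ≫ prod.fst) (q ≫ n ≫ prod.snd) = k) :
    Subobject.mk k ≤ relComp (Subobject.mk m) (Subobject.mk n) := by
  have hm := reassoc_of% (Subobject.underlyingIso_arrow m)
  have hn := reassoc_of% (Subobject.underlyingIso_arrow n)
  set x := Subobject.mk m with hx
  set y := Subobject.mk n with hy
  have hcond : (p ≫ (Subobject.underlyingIso m).inv) ≫ (x.arrow ≫ prod.snd)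
      = (q ≫ (Subobject.underlyingIso n).inv) ≫ (y.arrow ≫ prod.fst) := by
    simp only [Category.assoc]; rw [hm, hn]; exact hpq
  have hl : (pullback.lift _ _ hcond ≫ factorThruImage (prod.lift
      (pullback.fst (x.arrow ≫ prod.snd) (y.arrow ≫ prod.fst) ≫ x.arrow ≫ prod.fst)
      (pullback.snd (x.arrow ≫ prod.snd) (y.arrow ≫ prod.fst) ≫ y.arrow ≫ prod.snd)))
      ≫ image.ι _ = k := by
    rw [Category.assoc, image.fac]
    simp only [prod.comp_lift, Category.assoc, pullback.lift_fst_assoc,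
      pullback.lift_snd_assoc]
    rw [hm, hn]
    exact hk
  rw [relComp]
  exact Subobject.mk_le_mk_of_comm _ hl

lemma relComp_eq_mk {r s t A B K : C} (m : A ⟶ r ⨯ s) (n : B ⟶ s ⨯ t) (k : K ⟶ r ⨯ t)
    [Mono m] [Mono n] [Mono k]
    (up : ∀ {T : C} (p : T ⟶ A) (q : T ⟶ B), p ≫ m ≫ prod.snd = q ≫ n ≫ prod.fst →
      ∃ w : T ⟶ K, w ≫ k = prod.lift (p ≫ m ≫ prod.fst) (q ≫ n ≫ prod.snd))
    (p : K ⟶ A) (q : K ⟶ B)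
    (hpq : p ≫ m ≫ prod.snd = q ≫ n ≫ prod.fst)
    (hk : prod.lift (p ≫ m ≫ prod.fst) (q ≫ n ≫ prod.snd) = k) :
    relComp (Subobject.mk m) (Subobject.mk n) = Subobject.mk k :=
  le_antisymm (relComp_le_mk m n k up) (mk_le_relComp m n k p q hpq hk)

omit [HasImages C] in
lemma relTensor_eq_mk {a b c d A B K : C} (m : A ⟶ a ⨯ b) (n : B ⟶ c ⨯ d)
    (k : K ⟶ (a ⨯ c) ⨯ (b ⨯ d)) [Mono m] [Mono n] [Mono k]
    (u : K ⟶ A) (v : K ⟶ B)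
    (hu : u ≫ m = k ≫ prod.map prod.fst prod.fst)
    (hv : v ≫ n = k ≫ prod.map prod.snd prod.snd)
    (up : ∀ {T : C} (t : T ⟶ (a ⨯ c) ⨯ (b ⨯ d)) (p : T ⟶ A) (q : T ⟶ B),
      p ≫ m = t ≫ prod.map prod.fst prod.fst → q ≫ n = t ≫ prod.map prod.snd prod.snd →
      ∃ w : T ⟶ K, w ≫ k = t) :
    relTensor (Subobject.mk m) (Subobject.mk n) = Subobject.mk k := by
  have hrt : relTensor (Subobject.mk m) (Subobject.mk n)
      = Subobject.mk (pullback.snd m (prod.map prod.fst prod.fst))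
        ⊓ Subobject.mk (pullback.snd n (prod.map prod.snd prod.snd)) := rfl
  rw [hrt]
  apply le_antisymm
  · set Z := Subobject.mk (pullback.snd m (prod.map prod.fst prod.fst))
        ⊓ Subobject.mk (pullback.snd n (prod.map prod.snd prod.snd)) with hZ
    have h1 : Z ≤ Subobject.mk (pullback.snd m (prod.map prod.fst prod.fst)) := inf_le_left
    have h2 : Z ≤ Subobject.mk (pullback.snd n (prod.map prod.snd prod.snd)) := inf_le_right
    have e1 := reassoc_of% (Subobject.underlyingIso_hom_comp_eq_mk
      (pullback.snd m (prod.map (prod.fst : a ⨯ c ⟶ a) (prod.fst : b ⨯ d ⟶ b))))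
    have e2 := reassoc_of% (Subobject.underlyingIso_hom_comp_eq_mk
      (pullback.snd n (prod.map (prod.snd : a ⨯ c ⟶ c) (prod.snd : b ⨯ d ⟶ d))))
    have o1 := reassoc_of% (Subobject.ofLE_arrow h1)
    have o2 := reassoc_of% (Subobject.ofLE_arrow h2)
    obtain ⟨w, hw⟩ := up Z.arrow
      (Subobject.ofLE _ _ h1 ≫ (Subobject.underlyingIso _).hom
        ≫ pullback.fst m (prod.map prod.fst prod.fst))
      (Subobject.ofLE _ _ h2 ≫ (Subobject.underlyingIso _).hom
        ≫ pullback.fst n (prod.map prod.snd prod.snd))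
      (by simp only [Category.assoc, pullback.condition, e1, o1])
      (by simp only [Category.assoc, pullback.condition, e2, o2])
    exact Subobject.le_mk_of_comm w hw
  · refine le_inf ?_ ?_
    · exact Subobject.mk_le_mk_of_comm (pullback.lift u k hu) (pullback.lift_snd _ _ _)
    · exact Subobject.mk_le_mk_of_comm (pullback.lift v k hv) (pullback.lift_snd _ _ _)

end RegularLogic


set_option maxHeartbeats 2000000 in
/-- In the relations po-category of a regular category, each object `r` carries a
canonical adjoint commutative monoid structure: the graphs of the diagonal
`δ : r ⟶ r ⨯ r` and of the terminal map `ε : r ⟶ 1` are left adjoints, and their right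
adjoints, the cographs `μ := ⟨δ, 𝟙⟩` and `η := ⟨ε, 𝟙⟩`, make `r` a commutative monoid
object in `Rel(C)` (unitality, associativity and commutativity hold up to the canonical
structure isomorphisms of the cartesian product) whose structure maps are right
adjoints. -/
theorem statement19 {C : Type u} [Category.{v} C] [HasFiniteLimits C] [HasImages C]
    [hker : ∀ {X Y : C} (f : X ⟶ Y), HasCoequalizer (pullback.fst f f) (pullback.snd f f)]
    (hstab : ∀ {X Y Z : C} (f : X ⟶ Y) (g : Z ⟶ Y),
      Nonempty (RegularEpi f) → Nonempty (RegularEpi (pullback.snd f g)))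
    (r : C) :
    -- the graph of the diagonal is left adjoint to its cograph μ
    (idRel r ≤ relComp (graphRel (diag r)) (cographRel (diag r)) ∧
      relComp (cographRel (diag r)) (graphRel (diag r)) ≤ idRel (r ⨯ r)) ∧
    -- the graph of the terminal map is left adjoint to its cograph η
    (idRel r ≤ relComp (graphRel (terminal.from r)) (cographRel (terminal.from r)) ∧
      relComp (cographRel (terminal.from r)) (graphRel (terminal.from r)) ≤
        idRel (⊤_ C)) ∧
    -- left unitality
    relComp (relTensor (cographRel (terminal.from r)) (idRel r)) (cographRel (diag r)) =
      graphRel (prod.snd : (⊤_ C) ⨯ r ⟶ r) ∧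
    -- right unitality
    relComp (relTensor (idRel r) (cographRel (terminal.from r))) (cographRel (diag r)) =
      graphRel (prod.fst : r ⨯ (⊤_ C) ⟶ r) ∧
    -- associativity (up to the associator of the cartesian product)
    relComp (relTensor (cographRel (diag r)) (idRel r)) (cographRel (diag r)) =
      relComp
        (graphRel (prod.lift (prod.fst ≫ prod.fst)
          (prod.lift (prod.fst ≫ prod.snd) prod.snd) : (r ⨯ r) ⨯ r ⟶ r ⨯ (r ⨯ r)))
        (relComp (relTensor (idRel r) (cographRel (diag r))) (cographRel (diag r))) ∧
    -- commutativity (precomposition with the braiding)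
    relComp (graphRel (prod.lift prod.snd prod.fst : r ⨯ r ⟶ r ⨯ r))
        (cographRel (diag r)) =
      cographRel (diag r) := by
  refine ⟨⟨?_, ?_⟩, ⟨?_, ?_⟩, ?_, ?_, ?_, ?_⟩
  · -- 1a
    simp only [RegularLogic.idRel, graphRel, cographRel]
    exact mk_le_relComp _ _ _ (𝟙 r) (𝟙 r) (by simp) (by simp)
  · -- 1b
    simp only [RegularLogic.idRel, graphRel, cographRel]
    refine relComp_le_mk _ _ _ ?_
    intro T p q h
    simp at h
    exact ⟨p ≫ diag r, by ext <;> simp [h]⟩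
  · -- 2a
    simp only [RegularLogic.idRel, graphRel, cographRel]
    exact mk_le_relComp _ _ _ (𝟙 r) (𝟙 r) (by simp) (by simp)
  · -- 2b
    simp only [RegularLogic.idRel, graphRel, cographRel]
    refine relComp_le_mk _ _ _ ?_
    intro T p q h
    exact ⟨terminal.from T, by ext <;> exact Subsingleton.elim _ _⟩
  · -- left unitality
    haveI mk1 : Mono (prod.lift prod.fst (prod.lift prod.snd (prod.fst ≫ prod.snd)) :
        ((⊤_ C) ⨯ r) ⨯ r ⟶ ((⊤_ C) ⨯ r) ⨯ (r ⨯ r)) :=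
      mono_of_retraction (prod.lift prod.fst (prod.snd ≫ prod.fst)) (by ext <;> simp)
    have hT1 : relTensor (cographRel (terminal.from r)) (idRel r)
        = Subobject.mk (prod.lift prod.fst (prod.lift prod.snd (prod.fst ≫ prod.snd)) :
            ((⊤_ C) ⨯ r) ⨯ r ⟶ ((⊤_ C) ⨯ r) ⨯ (r ⨯ r)) := by
      simp only [RegularLogic.idRel, graphRel, cographRel]
      refine relTensor_eq_mk _ _ _ prod.snd (prod.fst ≫ prod.snd)
        (by ext <;> first | exact Subsingleton.elim _ _ | simp)
        (by ext <;> first | exact Subsingleton.elim _ _ | simp) ?_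
      intro T t p q hp hq
      have h1 : q = t ≫ prod.fst ≫ prod.snd := by
        have := congrArg (fun z => z ≫ (prod.fst : r ⨯ r ⟶ r)) hq; simpa using this
      have h2 : q = t ≫ prod.snd ≫ prod.snd := by
        have := congrArg (fun z => z ≫ (prod.snd : r ⨯ r ⟶ r)) hq; simpa using this
      refine ⟨prod.lift (t ≫ prod.fst) (t ≫ prod.snd ≫ prod.fst), ?_⟩
      ext <;> first | exact Subsingleton.elim _ _ | simp [← h1, ← h2]
    rw [hT1]
    simp only [graphRel, cographRel]
    refine relComp_eq_mk _ _ _ ?_ (prod.lift (𝟙 _) prod.snd) prod.snd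
      (by ext <;> simp) (by ext <;> simp)
    intro T p q h
    have h1 : p ≫ prod.snd = q := by
      have := congrArg (fun z => z ≫ (prod.fst : r ⨯ r ⟶ r)) h; simpa using this
    have h2 : p ≫ prod.fst ≫ prod.snd = q := by
      have := congrArg (fun z => z ≫ (prod.snd : r ⨯ r ⟶ r)) h; simpa using this
    exact ⟨p ≫ prod.fst, by ext <;> first | exact Subsingleton.elim _ _ | simp [h1, h2]⟩
  · -- right unitality
    haveI mk2 : Mono (prod.lift prod.fst (prod.lift (prod.fst ≫ prod.fst) prod.snd) :
        (r ⨯ (⊤_ C)) ⨯ r ⟶ (r ⨯ (⊤_ C)) ⨯ (r ⨯ r)) :=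
      mono_of_retraction (prod.lift prod.fst (prod.snd ≫ prod.snd)) (by ext <;> simp)
    have hT2 : relTensor (idRel r) (cographRel (terminal.from r))
        = Subobject.mk (prod.lift prod.fst (prod.lift (prod.fst ≫ prod.fst) prod.snd) :
            (r ⨯ (⊤_ C)) ⨯ r ⟶ (r ⨯ (⊤_ C)) ⨯ (r ⨯ r)) := by
      simp only [RegularLogic.idRel, graphRel, cographRel]
      refine relTensor_eq_mk _ _ _ (prod.fst ≫ prod.fst) prod.snd
        (by ext <;> first | exact Subsingleton.elim _ _ | simp)
        (by ext <;> first | exact Subsingleton.elim _ _ | simp) ?_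
      intro T t p q hp hq
      have h1 : p = t ≫ prod.fst ≫ prod.fst := by
        have := congrArg (fun z => z ≫ (prod.fst : r ⨯ r ⟶ r)) hp; simpa using this
      have h2 : p = t ≫ prod.snd ≫ prod.fst := by
        have := congrArg (fun z => z ≫ (prod.snd : r ⨯ r ⟶ r)) hp; simpa using this
      refine ⟨prod.lift (t ≫ prod.fst) (t ≫ prod.snd ≫ prod.snd), ?_⟩
      ext <;> first | exact Subsingleton.elim _ _ | simp [← h1, ← h2]
    rw [hT2]
    simp only [graphRel, cographRel]
    refine relComp_eq_mk _ _ _ ?_ (prod.lift (𝟙 _) prod.fst) prod.fst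
      (by ext <;> simp) (by ext <;> simp)
    intro T p q h
    have h1 : p ≫ prod.fst ≫ prod.fst = q := by
      have := congrArg (fun z => z ≫ (prod.fst : r ⨯ r ⟶ r)) h; simpa using this
    have h2 : p ≫ prod.snd = q := by
      have := congrArg (fun z => z ≫ (prod.snd : r ⨯ r ⟶ r)) h; simpa using this
    exact ⟨p ≫ prod.fst, by ext <;> first | exact Subsingleton.elim _ _ | simp [h1, h2]⟩
  · -- associativity
    haveI mk3 : Mono (prod.lift (prod.lift (prod.fst ≫ diag r) prod.snd) (𝟙 (r ⨯ r)) :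
        r ⨯ r ⟶ ((r ⨯ r) ⨯ r) ⨯ (r ⨯ r)) :=
      mono_of_retraction prod.snd (by simp)
    haveI mk4 : Mono (prod.lift (prod.lift prod.fst (prod.snd ≫ diag r)) (𝟙 (r ⨯ r)) :
        r ⨯ r ⟶ (r ⨯ (r ⨯ r)) ⨯ (r ⨯ r)) :=
      mono_of_retraction prod.snd (by simp)
    haveI mk5 : Mono (prod.lift (prod.lift (diag r) (𝟙 r)) (𝟙 r) :
        r ⟶ ((r ⨯ r) ⨯ r) ⨯ r) :=
      mono_of_retraction prod.snd (by simp)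
    haveI mk6 : Mono (prod.lift (prod.lift (𝟙 r) (diag r)) (𝟙 r) :
        r ⟶ (r ⨯ (r ⨯ r)) ⨯ r) :=
      mono_of_retraction prod.snd (by simp)
    have hT3 : relTensor (cographRel (diag r)) (idRel r)
        = Subobject.mk (prod.lift (prod.lift (prod.fst ≫ diag r) prod.snd) (𝟙 (r ⨯ r)) :
            r ⨯ r ⟶ ((r ⨯ r) ⨯ r) ⨯ (r ⨯ r)) := by
      simp only [RegularLogic.idRel, graphRel, cographRel]
      refine relTensor_eq_mk _ _ _ prod.fst prod.snd (by ext <;> simp) (by ext <;> simp) ?_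
      intro T t p q hp hq
      have hp1a : p = t ≫ prod.fst ≫ prod.fst ≫ prod.fst := by
        have := congrArg (fun z => (z ≫ prod.fst) ≫ (prod.fst : r ⨯ r ⟶ r)) hp
        simpa using this
      have hp1b : p = t ≫ prod.fst ≫ prod.fst ≫ prod.snd := by
        have := congrArg (fun z => (z ≫ prod.fst) ≫ (prod.snd : r ⨯ r ⟶ r)) hp
        simpa using this
      have hp2 : p = t ≫ prod.snd ≫ prod.fst := by
        have := congrArg (fun z => z ≫ (prod.snd : (r ⨯ r) ⨯ r ⟶ r)) hp; simpa using this
      have hq1 : q = t ≫ prod.fst ≫ prod.snd := by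
        have := congrArg (fun z => z ≫ (prod.fst : r ⨯ r ⟶ r)) hq; simpa using this
      have hq2 : q = t ≫ prod.snd ≫ prod.snd := by
        have := congrArg (fun z => z ≫ (prod.snd : r ⨯ r ⟶ r)) hq; simpa using this
      have g1 : t ≫ prod.fst ≫ prod.fst ≫ prod.fst = t ≫ prod.snd ≫ prod.fst :=
        hp1a.symm.trans hp2
      have g2 : t ≫ prod.fst ≫ prod.fst ≫ prod.snd = t ≫ prod.snd ≫ prod.fst :=
        hp1b.symm.trans hp2
      have g3 : t ≫ prod.fst ≫ prod.snd = t ≫ prod.snd ≫ prod.snd :=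
        hq1.symm.trans hq2
      exact ⟨t ≫ prod.snd, by ext <;> simp [g1, g2, g3]⟩
    have hT4 : relTensor (idRel r) (cographRel (diag r))
        = Subobject.mk (prod.lift (prod.lift prod.fst (prod.snd ≫ diag r)) (𝟙 (r ⨯ r)) :
            r ⨯ r ⟶ (r ⨯ (r ⨯ r)) ⨯ (r ⨯ r)) := by
      simp only [RegularLogic.idRel, graphRel, cographRel]
      refine relTensor_eq_mk _ _ _ prod.fst prod.snd (by ext <;> simp) (by ext <;> simp) ?_
      intro T t p q hp hq
      have hp1 : p = t ≫ prod.fst ≫ prod.fst := by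
        have := congrArg (fun z => z ≫ (prod.fst : r ⨯ r ⟶ r)) hp; simpa using this
      have hp2 : p = t ≫ prod.snd ≫ prod.fst := by
        have := congrArg (fun z => z ≫ (prod.snd : r ⨯ r ⟶ r)) hp; simpa using this
      have hq1a : q = t ≫ prod.fst ≫ prod.snd ≫ prod.fst := by
        have := congrArg (fun z => (z ≫ prod.fst) ≫ (prod.fst : r ⨯ r ⟶ r)) hq
        simpa using this
      have hq1b : q = t ≫ prod.fst ≫ prod.snd ≫ prod.snd := by
        have := congrArg (fun z => (z ≫ prod.fst) ≫ (prod.snd : r ⨯ r ⟶ r)) hq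
        simpa using this
      have hq2 : q = t ≫ prod.snd ≫ prod.snd := by
        have := congrArg (fun z => z ≫ (prod.snd : (r ⨯ r) ⨯ r ⟶ r)) hq; simpa using this
      have g1 : t ≫ prod.fst ≫ prod.fst = t ≫ prod.snd ≫ prod.fst := hp1.symm.trans hp2
      have g2 : t ≫ prod.fst ≫ prod.snd ≫ prod.fst = t ≫ prod.snd ≫ prod.snd :=
        hq1a.symm.trans hq2
      have g3 : t ≫ prod.fst ≫ prod.snd ≫ prod.snd = t ≫ prod.snd ≫ prod.snd :=
        hq1b.symm.trans hq2
      exact ⟨t ≫ prod.snd, by ext <;> simp [g1, g2, g3]⟩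
    have hR1 : relComp (relTensor (idRel r) (cographRel (diag r))) (cographRel (diag r))
        = Subobject.mk (prod.lift (prod.lift (𝟙 r) (diag r)) (𝟙 r) :
            r ⟶ (r ⨯ (r ⨯ r)) ⨯ r) := by
      rw [hT4]
      simp only [cographRel]
      refine relComp_eq_mk _ _ _ ?_ (diag r) (𝟙 r) (by ext <;> simp) (by ext <;> simp)
      intro T p q h
      have hA : p ≫ prod.fst = q := by
        have := congrArg (fun z => z ≫ (prod.fst : r ⨯ r ⟶ r)) h; simpa using this
      have hB : p ≫ prod.snd = q := by
        have := congrArg (fun z => z ≫ (prod.snd : r ⨯ r ⟶ r)) h; simpa using this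
      exact ⟨q, by ext <;> simp [hA, hB]⟩
    have hL5 : relComp (relTensor (cographRel (diag r)) (idRel r)) (cographRel (diag r))
        = Subobject.mk (prod.lift (prod.lift (diag r) (𝟙 r)) (𝟙 r) :
            r ⟶ ((r ⨯ r) ⨯ r) ⨯ r) := by
      rw [hT3]
      simp only [cographRel]
      refine relComp_eq_mk _ _ _ ?_ (diag r) (𝟙 r) (by ext <;> simp) (by ext <;> simp)
      intro T p q h
      have hA : p ≫ prod.fst = q := by
        have := congrArg (fun z => z ≫ (prod.fst : r ⨯ r ⟶ r)) h; simpa using this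
      have hB : p ≫ prod.snd = q := by
        have := congrArg (fun z => z ≫ (prod.snd : r ⨯ r ⟶ r)) h; simpa using this
      exact ⟨q, by ext <;> simp [hA, hB]⟩
    have hOut : relComp
        (graphRel (prod.lift (prod.fst ≫ prod.fst)
          (prod.lift (prod.fst ≫ prod.snd) prod.snd) : (r ⨯ r) ⨯ r ⟶ r ⨯ (r ⨯ r)))
        (Subobject.mk (prod.lift (prod.lift (𝟙 r) (diag r)) (𝟙 r) :
            r ⟶ (r ⨯ (r ⨯ r)) ⨯ r))
        = Subobject.mk (prod.lift (prod.lift (diag r) (𝟙 r)) (𝟙 r) :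
            r ⟶ ((r ⨯ r) ⨯ r) ⨯ r) := by
      simp only [graphRel]
      refine relComp_eq_mk _ _ _ ?_ (prod.lift (diag r) (𝟙 r)) (𝟙 r)
        (by ext <;> simp) (by ext <;> simp)
      intro T p q h
      have h1 : p ≫ prod.fst ≫ prod.fst = q := by
        have := congrArg (fun z => z ≫ (prod.fst : r ⨯ (r ⨯ r) ⟶ r)) h; simpa using this
      have h2 : p ≫ prod.fst ≫ prod.snd = q := by
        have := congrArg (fun z => (z ≫ prod.snd) ≫ (prod.fst : r ⨯ r ⟶ r)) h
        simpa using this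
      have h3 : p ≫ prod.snd = q := by
        have := congrArg (fun z => (z ≫ prod.snd) ≫ (prod.snd : r ⨯ r ⟶ r)) h
        simpa using this
      exact ⟨q, by ext <;> simp [h1, h2, h3]⟩
    rw [hL5, hR1, hOut]
  · -- commutativity
    simp only [graphRel, cographRel]
    refine relComp_eq_mk _ _ _ ?_ (diag r) (𝟙 r) (by ext <;> simp) (by ext <;> simp)
    intro T p q h
    have h1 : p ≫ prod.snd = q := by
      have := congrArg (fun z => z ≫ (prod.fst : r ⨯ r ⟶ r)) h; simpa using this
    have h2 : p ≫ prod.fst = q := by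
      have := congrArg (fun z => z ≫ (prod.snd : r ⨯ r ⟶ r)) h; simpa using this
    exact ⟨q, by ext <;> simp [h1, h2]⟩
end
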